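/- arXiv:2407.01431 — 5 statements merged into one kernel-verified Lean document; each statement's English description precedes it below -/
import Mathlib

section
/- For every pair of vertices s,t ∈ V there exists a group Steiner path π from s to t in G that traverses at most 2(n−1) edges (counted with multiplicity) and whose length equals the group Steiner distance, i.e., w(π) = σ_G(s,t); in particular the infimum defining σ_G(s,t) is attained. -/
open SimpleGraph ENNReal

/-- The length (total weight) of a walk: the sum of its edge weights, with multiplicity. -/
def walkWeight {V : Type*} {G : SimpleGraph V} (w : V → V → ℝ) {u v : V} (p : G.Walk u v) : ℝ :=
  (p.darts.map (fun d => w d.toProd.1 d.toProd.2)).sum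

/-- A walk is a group Steiner path w.r.t. the groups `R` if it visits at least one
vertex of every group. -/
def IsGroupSteiner {V : Type*} {G : SimpleGraph V} {k : ℕ} (R : Fin k → Set V) {u v : V}
    (p : G.Walk u v) : Prop :=
  ∀ i, ∃ x ∈ R i, x ∈ p.support

/-- The group Steiner distance: the infimum of the lengths of group Steiner paths
from `s` to `t` (`∞` if there is none). -/
noncomputable def gsDist {V : Type*} (G : SimpleGraph V) (w : V → V → ℝ) {k : ℕ}
    (R : Fin k → Set V) (s t : V) : ℝ≥0∞ :=
  ⨅ p : {p : G.Walk s t // IsGroupSteiner R p}, ENNReal.ofReal (walkWeight w p.1)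

/-- The ordinary shortest-path distance: the infimum of the lengths of walks
from `s` to `t` (`∞` if there is none). -/
noncomputable def spDist {V : Type*} (G : SimpleGraph V) (w : V → V → ℝ) (s t : V) : ℝ≥0∞ :=
  ⨅ p : G.Walk s t, ENNReal.ofReal (walkWeight w p)

namespace GSAux
variable {V : Type*} [DecidableEq V]

def degM (m : Multiset (Sym2 V)) (v : V) : ℕ := Multiset.countP (fun e => v ∈ e) m

lemma degM_add (a b : Multiset (Sym2 V)) (v : V) :
    degM (a + b) v = degM a v + degM b v := Multiset.countP_add _ _ _

lemma degM_cons (e : Sym2 V) (m : Multiset (Sym2 V)) (v : V) :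
    degM (e ::ₘ m) v = (if v ∈ e then 1 else 0) + degM m v := by
  simp [degM, Multiset.countP_cons]
  by_cases h : v ∈ e <;> simp [h] <;> omega

lemma degM_sub {x m : Multiset (Sym2 V)} (h : x ≤ m) (v : V) :
    degM (m - x) v = degM m v - degM x v := by
  have h1 : m - x + x = m := tsub_add_cancel_of_le h
  have h2 := degM_add (m - x) x v
  rw [h1] at h2
  omega

lemma degM_mono {x m : Multiset (Sym2 V)} (h : x ≤ m) (v : V) :
    degM x v ≤ degM m v := Multiset.countP_le_of_le _ h

lemma degM_pos_of_mem {m : Multiset (Sym2 V)} {e : Sym2 V} (he : e ∈ m) {v : V}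
    (hv : v ∈ e) : 0 < degM m v := by
  obtain ⟨m', rfl⟩ := Multiset.exists_cons_of_mem he
  rw [degM_cons]
  simp [hv]

lemma nodup_le {l : List (Sym2 V)} {m : Multiset (Sym2 V)} (hn : l.Nodup)
    (hm : ∀ x ∈ l, x ∈ m) : (↑l : Multiset (Sym2 V)) ≤ m := by
  rw [Multiset.le_iff_count]
  intro e
  by_cases he : e ∈ l
  · have h1 : (↑l : Multiset (Sym2 V)).count e = 1 := by
      simpa [Multiset.coe_count] using List.count_eq_one_of_mem hn he
    rw [h1]
    exact Multiset.one_le_count_iff_mem.mpr (hm e he)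
  · simp [Multiset.coe_count, List.count_eq_zero_of_not_mem he]

variable {G : SimpleGraph V}

lemma walk_parity {u t : V} (p : G.Walk u t) (v : V) :
    Odd (degM (↑p.edges) v) ↔ ((v = u ∨ v = t) ∧ u ≠ t) := by
  induction p with
  | nil => simp [degM]
  | @cons a b c h q ih =>
    have hab : a ≠ b := h.ne
    rw [Walk.edges_cons]
    rw [← Multiset.cons_coe, degM_cons]
    by_cases hva : v = a <;> by_cases hvb : v = b <;> by_cases hvc : v = c <;>
      by_cases hbc : b = c <;> by_cases hac : a = c <;>
      simp_all [Sym2.mem_iff, Nat.odd_add, Nat.even_add_one, parity_simps] <;> omega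

lemma closed_walk_even {x : V} (c : G.Walk x x) (v : V) :
    Even (degM (↑c.edges) v) := by
  have := walk_parity c v
  simp at this
  exact this

/-- reachability using a multiset of edges -/
def ReachM (m : Multiset (Sym2 V)) : V → V → Prop :=
  Relation.ReflTransGen (fun a b => s(a, b) ∈ m)

lemma ReachM.symm {m : Multiset (Sym2 V)} {a b : V} (h : ReachM m a b) : ReachM m b a := by
  refine (@Relation.ReflTransGen.symmetric _ _ ⟨?_⟩).symm _ _ h
  intro x y hxy
  rwa [Sym2.eq_swap] at hxy

/-- extract an edge incident to a vertex of positive degree -/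
lemma exists_incident {m : Multiset (Sym2 V)} (hE : ∀ e ∈ m, e ∈ G.edgeSet) {x : V}
    (hx : 0 < degM m x) : ∃ u, G.Adj x u ∧ s(x, u) ∈ m := by
  obtain ⟨e, hem, hxe⟩ := Multiset.countP_pos.mp hx
  induction e with
  | _ a b =>
    rw [Sym2.mem_iff] at hxe
    have hadj : G.Adj a b := hE _ hem
    rcases hxe with rfl | rfl
    · exact ⟨b, hadj, hem⟩
    · exact ⟨a, hadj.symm, by rwa [Sym2.eq_swap]⟩

/-- open trail extraction: if degrees are odd exactly at x and z (x ≠ z), there is a walk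
from z to x whose edge multiset is contained in m. -/
lemma trail_exists : ∀ (N : ℕ) (m : Multiset (Sym2 V)), Multiset.card m ≤ N →
    (∀ e ∈ m, e ∈ G.edgeSet) → ∀ (x z : V), x ≠ z →
    (∀ v, Odd (degM m v) ↔ (v = x ∨ v = z)) →
    ∃ p : G.Walk z x, (↑p.edges : Multiset (Sym2 V)) ≤ m := by
  intro N
  induction N with
  | zero =>
    intro m hcard _ x z hxz hpar
    exfalso
    have : m = 0 := by
      rw [← Multiset.card_eq_zero]; omega
    subst this
    have := (hpar z).mpr (Or.inr rfl)
    simp [degM] at this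
  | succ N ih =>
    intro m hcard hE x z hxz hpar
    have hz : 0 < degM m z := by
      have := (hpar z).mpr (Or.inr rfl)
      exact Nat.pos_of_ne_zero (by rintro h; rw [h] at this; simp at this)
    obtain ⟨u, hadj, hem⟩ := exists_incident hE hz
    set e : Sym2 V := s(z, u) with he
    obtain ⟨m', hm'⟩ := Multiset.exists_cons_of_mem hem
    have hdeg : ∀ v, degM m v = (if v ∈ e then 1 else 0) + degM m' v := by
      intro v; rw [hm', degM_cons]
    by_cases hux : u = x
    · refine ⟨(Walk.cons hadj Walk.nil).copy rfl hux, ?_⟩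
      rw [Walk.edges_copy]
      simp only [Walk.edges_cons, Walk.edges_nil]
      have h1 : (↑[s(z,u)] : Multiset (Sym2 V)) = {s(z,u)} := rfl
      rw [h1]
      exact Multiset.singleton_le.mpr hem
    · -- recurse on m'
      have hzu : z ≠ u := hadj.ne
      have hpar' : ∀ v, Odd (degM m' v) ↔ (v = x ∨ v = u) := by
        intro v
        have h1 := hpar v
        have h2 := hdeg v
        have hme : v ∈ e ↔ (v = z ∨ v = u) := by rw [he]; exact Sym2.mem_iff
        by_cases hvz : v = z
        · -- v = z : degM m v = 1 + d', Odd there; so d' even; both sides False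
          subst hvz
          rw [if_pos (hme.mpr (Or.inl rfl))] at h2
          have hodd : Odd (degM m v) := h1.mpr (Or.inr rfl)
          rw [h2, Nat.add_comm, Nat.odd_add_one, Nat.not_odd_iff_even] at hodd
          constructor
          · intro hc; exact absurd hc (Nat.not_odd_iff_even.mpr hodd)
          · rintro (rfl | rfl)
            · exact absurd rfl hxz
            · exact absurd rfl hzu
        · by_cases hvu : v = u
          · subst hvu
            rw [if_pos (hme.mpr (Or.inr rfl))] at h2
            have hnodd : ¬ Odd (degM m v) := by
              rw [h1]; rintro (h | h); exact hux h; exact hvz h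
            rw [h2, Nat.add_comm, Nat.odd_add_one, Nat.not_odd_iff_even,
              Nat.not_even_iff_odd] at hnodd
            exact ⟨fun _ => Or.inr rfl, fun _ => hnodd⟩
          · rw [if_neg (by rw [hme]; tauto)] at h2
            rw [h2, Nat.zero_add] at h1
            rw [h1]
            constructor
            · rintro (h | h)
              · exact Or.inl h
              · exact absurd h hvz
            · rintro (h | h)
              · exact Or.inl h
              · exact absurd h hvu
      have hcard' : Multiset.card m' ≤ N := by
        have : Multiset.card m = Multiset.card m' + 1 := by rw [hm']; simp
        omega
      have hE' : ∀ f ∈ m', f ∈ G.edgeSet := fun f hf => hE f (by rw [hm']; simp [hf])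
      obtain ⟨q, hq⟩ := ih m' hcard' hE' x u (fun h => hux h.symm) hpar'
      refine ⟨Walk.cons hadj q, ?_⟩
      rw [Walk.edges_cons, ← Multiset.cons_coe, hm']
      exact Multiset.cons_le_cons _ hq

lemma closed_trail_exists {m : Multiset (Sym2 V)} (hE : ∀ e ∈ m, e ∈ G.edgeSet)
    (heven : ∀ v, Even (degM m v)) {x : V} (hx : 0 < degM m x) :
    ∃ c : G.Walk x x, c.edges ≠ [] ∧ (↑c.edges : Multiset (Sym2 V)) ≤ m := by
  obtain ⟨u, hadj, hem⟩ := exists_incident hE hx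
  set e : Sym2 V := s(x, u) with he
  obtain ⟨m', hm'⟩ := Multiset.exists_cons_of_mem hem
  have hdeg : ∀ v, degM m v = (if v ∈ e then 1 else 0) + degM m' v := by
    intro v; rw [hm', degM_cons]
  have hux : x ≠ u := hadj.ne
  have hpar' : ∀ v, Odd (degM m' v) ↔ (v = x ∨ v = u) := by
    intro v
    have h1 : Even (degM m v) := heven v
    have h2 := hdeg v
    have hme : v ∈ e ↔ (v = x ∨ v = u) := by rw [he]; exact Sym2.mem_iff
    by_cases hv : v = x ∨ v = u
    · rw [if_pos (hme.mpr hv)] at h2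
      rw [h2, Nat.add_comm, Nat.even_add_one, Nat.not_even_iff_odd] at h1
      exact ⟨fun _ => hv, fun _ => h1⟩
    · rw [if_neg (fun hc => hv (hme.mp hc))] at h2
      rw [h2, Nat.zero_add] at h1
      exact ⟨fun hc => absurd hc (Nat.not_odd_iff_even.mpr h1), fun hc => absurd hc hv⟩
  have hE' : ∀ f ∈ m', f ∈ G.edgeSet := fun f hf => hE f (by rw [hm']; simp [hf])
  obtain ⟨q, hq⟩ := trail_exists (Multiset.card m') m' le_rfl hE' x u hux hpar'
  refine ⟨Walk.cons hadj q, by simp, ?_⟩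
  rw [Walk.edges_cons, ← Multiset.cons_coe, hm']
  exact Multiset.cons_le_cons _ hq

/-- splicing a closed walk into a walk at a common vertex -/
lemma splice {s t x : V} (p : G.Walk s t) (hx : x ∈ p.support) (c : G.Walk x x) :
    ∃ q : G.Walk s t, (↑q.edges : Multiset (Sym2 V)) = ↑p.edges + ↑c.edges ∧
      ∀ y ∈ p.support, y ∈ q.support := by
  refine ⟨(p.takeUntil x hx).append (c.append (p.dropUntil x hx)), ?_, ?_⟩
  · have hspec := p.take_spec hx
    have he : p.edges = (p.takeUntil x hx).edges ++ (p.dropUntil x hx).edges := by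
      rw [← Walk.edges_append, hspec]
    rw [Walk.edges_append, Walk.edges_append, he]
    rw [← Multiset.coe_add, ← Multiset.coe_add, ← Multiset.coe_add]
    abel
  · intro y hy
    have hspec := p.take_spec hx
    rw [← hspec, Walk.mem_support_append_iff] at hy
    rw [Walk.mem_support_append_iff, Walk.mem_support_append_iff]
    tauto

/-- if the leftover multiset is nonempty, some vertex of the walk has positive leftover
degree (using connectivity of the total edge multiset) -/
lemma attach_point {s t : V} (p : G.Walk s t) (r : Multiset (Sym2 V))
    (hconn : ∀ e ∈ r, ∀ u ∈ e, ReachM ((p.edges : Multiset (Sym2 V)) + r) s u)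
    (hr : r ≠ 0) : ∃ x ∈ p.support, 0 < degM r x := by
  obtain ⟨e, he⟩ := Multiset.exists_mem_of_ne_zero hr
  have key : ∀ z : V, ReachM ((p.edges : Multiset (Sym2 V)) + r) z s → 0 < degM r z →
      ∃ x ∈ p.support, 0 < degM r x := by
    intro z hreach
    induction hreach using Relation.ReflTransGen.head_induction_on with
    | refl => intro h; exact ⟨s, p.start_mem_support, h⟩
    | head hab _ ih =>
      rename_i a b _
      intro _
      by_cases hap : a ∈ p.support
      · exact ⟨a, hap, by assumption⟩
      · have hab' : s(a, b) ∈ (↑p.edges + r : Multiset (Sym2 V)) := hab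
        rw [Multiset.mem_add] at hab'
        rcases hab' with h | h
        · exact absurd (p.fst_mem_support_of_mem_edges (by exact_mod_cast h)) hap
        · exact ih (degM_pos_of_mem h (by simp))
  induction e with
  | _ a b =>
    have ha : 0 < degM r a := degM_pos_of_mem he (by simp)
    have hreach : ReachM ((p.edges : Multiset (Sym2 V)) + r) s a := hconn _ he a (by simp)
    exact key a hreach.symm ha

/-- Hierholzer extension: absorb an even-degree leftover multiset into a walk -/
lemma euler_extend : ∀ (N : ℕ) (r : Multiset (Sym2 V)), Multiset.card r ≤ N →
    ∀ {s t : V} (p : G.Walk s t),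
    (∀ e ∈ r, e ∈ G.edgeSet) → (∀ v, Even (degM r v)) →
    (∀ e ∈ r, ∀ u ∈ e, ReachM ((p.edges : Multiset (Sym2 V)) + r) s u) →
    ∃ q : G.Walk s t, (↑q.edges : Multiset (Sym2 V)) = ↑p.edges + r ∧
      ∀ y ∈ p.support, y ∈ q.support := by
  intro N
  induction N with
  | zero =>
    intro r hcard s t p _ _ _
    have : r = 0 := by rw [← Multiset.card_eq_zero]; omega
    subst this
    exact ⟨p, by simp, fun y hy => hy⟩
  | succ N ih =>
    intro r hcard s t p hE heven hconn
    by_cases hr : r = 0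
    · subst hr; exact ⟨p, by simp, fun y hy => hy⟩
    · obtain ⟨x, hxp, hxr⟩ := attach_point p r hconn hr
      obtain ⟨c, hcne, hcle⟩ := closed_trail_exists hE heven hxr
      obtain ⟨q1, hq1e, hq1s⟩ := splice p hxp c
      set cm : Multiset (Sym2 V) := (c.edges : Multiset (Sym2 V)) with hcm
      have hsum : (q1.edges : Multiset (Sym2 V)) + (r - cm) = (p.edges : Multiset (Sym2 V)) + r := by
        rw [hq1e, add_assoc, add_comm cm _, tsub_add_cancel_of_le hcle]
      have hcard' : Multiset.card (r - cm) ≤ N := by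
        have h1 : Multiset.card (r - cm) = Multiset.card r - Multiset.card cm := by
          rw [Multiset.card_sub hcle]
        have h2 : 0 < Multiset.card cm := by
          rw [hcm]
          simp only [Multiset.coe_card]
          exact List.length_pos_iff.mpr hcne
        omega
      have hE' : ∀ f ∈ r - cm, f ∈ G.edgeSet :=
        fun f hf => hE f (Multiset.mem_of_le (tsub_le_self) hf)
      have heven' : ∀ v, Even (degM (r - cm) v) := by
        intro v
        rw [degM_sub hcle]
        rw [Nat.even_sub (degM_mono hcle v)]
        constructor
        · intro _; exact closed_walk_even c v
        · intro _; exact heven v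
      have hconn' : ∀ e ∈ r - cm, ∀ u ∈ e,
          ReachM ((q1.edges : Multiset (Sym2 V)) + (r - cm)) s u := by
        intro f hf u hu
        rw [hsum]
        exact hconn f (Multiset.mem_of_le (tsub_le_self) hf) u hu
      obtain ⟨q, hq, hqs⟩ := ih (r - cm) hcard' q1 hE' heven' hconn'
      refine ⟨q, by rw [hq, hsum], fun y hy => hqs y (hq1s y hy)⟩

lemma ReachM.mono {m m' : Multiset (Sym2 V)} (h : ∀ e ∈ m, e ∈ m') {a b : V}
    (hr : ReachM m a b) : ReachM m' a b :=
  Relation.ReflTransGen.mono (fun x y hxy => h _ hxy) _ _ hr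

lemma ReachM.trans {m : Multiset (Sym2 V)} {a b c : V} (h1 : ReachM m a b)
    (h2 : ReachM m b c) : ReachM m a c :=
  Relation.ReflTransGen.trans h1 h2

lemma walk_of_reach {m : Multiset (Sym2 V)} (hE : ∀ e ∈ m, e ∈ G.edgeSet) {a b : V}
    (h : ReachM m a b) : ∃ p : G.Walk a b, ∀ e ∈ p.edges, e ∈ m := by
  induction h with
  | refl => exact ⟨Walk.nil, by simp⟩
  | tail hs hstep ih =>
    rename_i c d
    obtain ⟨p, hp⟩ := ih
    have hadj : G.Adj c d := (G.mem_edgeSet).mp (hE _ hstep)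
    refine ⟨p.concat hadj, ?_⟩
    intro e he
    rw [Walk.edges_concat, List.concat_eq_append] at he
    rcases List.mem_append.mp he with h | h
    · exact hp e h
    · simp only [List.mem_singleton] at h
      subst h
      exact hstep

/-- the Euler trail theorem for edge multisets -/
lemma euler_main {s t : V} (m : Multiset (Sym2 V)) (hE : ∀ e ∈ m, e ∈ G.edgeSet)
    (hpar : ∀ v, Odd (degM m v) ↔ ((v = s ∨ v = t) ∧ s ≠ t))
    (hconn : ∀ e ∈ m, ∀ u ∈ e, ReachM m s u) :
    ∃ q : G.Walk s t, (q.edges : Multiset (Sym2 V)) = m := by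
  by_cases hst : s = t
  · subst hst
    have heven : ∀ v, Even (degM m v) := by
      intro v
      rw [← Nat.not_odd_iff_even, hpar v]
      tauto
    have hconn' : ∀ e ∈ m, ∀ u ∈ e,
        ReachM (((Walk.nil : G.Walk s s).edges : Multiset (Sym2 V)) + m) s u := by
      simpa using hconn
    obtain ⟨q, hq, _⟩ := euler_extend (Multiset.card m) m le_rfl (Walk.nil : G.Walk s s)
      hE heven hconn'
    refine ⟨q, by simpa using hq⟩
  · -- s ≠ t : peel off a path from s to t
    have ht : 0 < degM m t := by
      have := (hpar t).mpr ⟨Or.inr rfl, hst⟩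
      exact Nat.pos_of_ne_zero (by rintro h; rw [h] at this; simp at this)
    obtain ⟨e, hem, hte⟩ := Multiset.countP_pos.mp ht
    have hreach : ReachM m s t := hconn e hem t hte
    obtain ⟨p1, hp1⟩ := walk_of_reach hE hreach
    set p0 := p1.bypass with hp0
    have hp0path : p0.IsPath := p1.bypass_isPath
    have hp0m : ∀ e ∈ p0.edges, e ∈ m := fun f hf => hp1 f (p1.edges_bypass_subset hf)
    have hle : (p0.edges : Multiset (Sym2 V)) ≤ m :=
      nodup_le hp0path.isTrail.edges_nodup hp0m
    set r : Multiset (Sym2 V) := m - ↑p0.edges with hr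
    have hsum : (p0.edges : Multiset (Sym2 V)) + r = m := by
      rw [hr, add_comm, tsub_add_cancel_of_le hle]
    have heven : ∀ v, Even (degM r v) := by
      intro v
      rw [hr, degM_sub hle, Nat.even_sub (degM_mono hle v)]
      rw [← Nat.not_odd_iff_even, ← Nat.not_odd_iff_even, hpar v, walk_parity p0 v]
    have hconn' : ∀ e ∈ r, ∀ u ∈ e, ReachM ((p0.edges : Multiset (Sym2 V)) + r) s u := by
      intro f hf u hu
      rw [hsum]
      exact hconn f (Multiset.mem_of_le (hr ▸ tsub_le_self) hf) u hu
    have hEr : ∀ f ∈ r, f ∈ G.edgeSet :=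
      fun f hf => hE f (Multiset.mem_of_le (hr ▸ tsub_le_self) hf)
    obtain ⟨q, hq, _⟩ := euler_extend (Multiset.card r) r le_rfl p0 hEr heven hconn'
    exact ⟨q, by rw [hq, hsum]⟩

/-- the first-entry spanning forest of a walk: `n₀ - 1` edges of the walk that connect
all of its support -/
lemma first_entry_forest {s t : V} (p : G.Walk s t) :
    ∃ F : Finset (Sym2 V), ((F.val : Multiset (Sym2 V)) ≤ (p.edges : Multiset (Sym2 V))) ∧
      F.card = p.support.toFinset.card - 1 ∧
      ∀ v ∈ p.support, ReachM F.val s v := by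
  induction p with
  | nil => exact ⟨∅, by simp, by simp, by intro v hv; simp at hv; subst hv; exact .refl⟩
  | @cons a b c h q ih =>
    obtain ⟨F', hF'le, hF'card, hF'reach⟩ := ih
    by_cases hax : a ∈ q.support
    · refine ⟨F', le_trans hF'le ?_, ?_, ?_⟩
      · rw [Walk.edges_cons, ← Multiset.cons_coe]
        exact Multiset.le_cons_self _ _
      · rw [Walk.support_cons]
        have : (a :: q.support).toFinset = q.support.toFinset := by
          simp [List.toFinset_cons, Finset.insert_eq_self.mpr (List.mem_toFinset.mpr hax)]
        rw [this, hF'card]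
      · intro v hv
        rw [Walk.support_cons, List.mem_cons] at hv
        have hab : ReachM F'.val a b := by
          have h1 : ReachM F'.val b a := hF'reach a hax
          exact h1.symm
        rcases hv with rfl | hv
        · exact .refl
        · exact hab.trans (hF'reach v hv)
    · have hnotmem : s(a, b) ∉ F' := by
        intro hmem
        have : s(a, b) ∈ (q.edges : Multiset (Sym2 V)) := Multiset.mem_of_le hF'le hmem
        have : a ∈ q.support := q.fst_mem_support_of_mem_edges (by exact_mod_cast this)
        exact hax this
      refine ⟨insert s(a, b) F', ?_, ?_, ?_⟩
      · rw [Finset.insert_val, Multiset.ndinsert_of_notMem hnotmem,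
          Walk.edges_cons, ← Multiset.cons_coe]
        exact Multiset.cons_le_cons _ hF'le
      · rw [Finset.card_insert_of_notMem hnotmem, hF'card]
        rw [Walk.support_cons]
        have hq1 : 0 < q.support.toFinset.card := by
          rw [Finset.card_pos]
          exact ⟨b, by simpa using q.start_mem_support⟩
        have : (a :: q.support).toFinset = insert a q.support.toFinset := by
          simp [List.toFinset_cons]
        rw [this, Finset.card_insert_of_notMem (by simpa using hax)]
        omega
      · intro v hv
        have hsub : ∀ e ∈ F'.val, e ∈ (insert s(a, b) F').val := by
          intro e he
          simp only [Finset.mem_val] at *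
          exact Finset.mem_insert_of_mem he
        have hab : ReachM (insert s(a, b) F').val a b :=
          Relation.ReflTransGen.single (by simp)
        rw [Walk.support_cons, List.mem_cons] at hv
        rcases hv with rfl | hv
        · exact .refl
        · exact hab.trans (ReachM.mono hsub (hF'reach v hv))

lemma mem_edge_decomp {e : Sym2 V} (he : e ∈ G.edgeSet) {y : V} (hy : y ∈ e) :
    ∃ w, G.Adj y w ∧ e = s(y, w) := by
  induction e with
  | _ a b =>
    have hadj : G.Adj a b := he
    rw [Sym2.mem_iff] at hy
    rcases hy with rfl | rfl
    · exact ⟨b, hadj, rfl⟩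
    · exact ⟨a, hadj.symm, Sym2.eq_swap⟩

lemma two_distinct_of_deg {m : Multiset (Sym2 V)} (hn : m.Nodup) {v : V}
    (h : 2 ≤ degM m v) : ∃ e1 e2 : Sym2 V, e1 ≠ e2 ∧ e1 ∈ m ∧ e2 ∈ m ∧ v ∈ e1 ∧ v ∈ e2 := by
  set f := m.filter (fun e => v ∈ e) with hf
  have hcard : 2 ≤ Multiset.card f := by
    rw [hf, ← Multiset.countP_eq_card_filter]
    exact h
  have hfn : f.Nodup := hn.filter _
  obtain ⟨e1, he1⟩ := Multiset.exists_mem_of_ne_zero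
    (Multiset.card_pos.mp (lt_of_lt_of_le (by norm_num) hcard) : f ≠ 0)
  have h2 : f.erase e1 ≠ 0 := by
    intro hzero
    have hh := Multiset.card_erase_of_mem he1
    rw [hzero] at hh
    simp only [Multiset.card_zero, Nat.pred_eq_sub_one] at hh
    omega
  obtain ⟨e2, he2⟩ := Multiset.exists_mem_of_ne_zero h2
  obtain ⟨hne, he2'⟩ := (Multiset.Nodup.mem_erase_iff hfn).mp he2
  refine ⟨e1, e2, fun hc => hne hc.symm, ?_, ?_, ?_, ?_⟩
  · exact (Multiset.mem_filter.mp he1).1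
  · exact (Multiset.mem_filter.mp he2').1
  · exact (Multiset.mem_filter.mp he1).2
  · exact (Multiset.mem_filter.mp he2').2

lemma deg_two_of_two_mem {m : Multiset (Sym2 V)} {e1 e2 : Sym2 V} (hne : e1 ≠ e2)
    (h1 : e1 ∈ m) (h2 : e2 ∈ m) {v : V} (hv1 : v ∈ e1) (hv2 : v ∈ e2) :
    2 ≤ degM m v := by
  obtain ⟨m', rfl⟩ := Multiset.exists_cons_of_mem h1
  have h2' : e2 ∈ m' := by
    rcases Multiset.mem_cons.mp h2 with h | h
    · exact absurd h.symm hne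
    · exact h
  rw [degM_cons, if_pos hv1]
  have := degM_pos_of_mem h2' hv2
  omega

lemma support_mem_edge {x y : V} (q : G.Walk x y) (hq : q.edges ≠ []) {v : V}
    (hv : v ∈ q.support) : ∃ e ∈ q.edges, v ∈ e := by
  induction q with
  | nil => simp at hq
  | @cons a b c h r ih =>
    rw [Walk.support_cons, List.mem_cons] at hv
    rcases hv with rfl | hv
    · exact ⟨s(v, b), by simp, by simp⟩
    · by_cases hr : r.edges = []
      · have : r.Nil := by
          cases r with
          | nil => exact Walk.nil_nil
          | cons h' r' => simp [Walk.edges_cons] at hr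
        have hvb : v = b := by
          cases r with
          | nil => simpa using hv
          | cons h' r' => simp [Walk.edges_cons] at hr
        subst hvb
        exact ⟨s(a, v), by simp, by simp⟩
      · obtain ⟨e, hee, hve⟩ := ih hr hv
        exact ⟨e, by simp [hee], hve⟩

lemma sym2_decomp (e : Sym2 V) : ∃ a b, e = s(a, b) := by
  induction e with
  | _ a b => exact ⟨a, b, rfl⟩

lemma mem_support_of_mem_edges' {x y : V} (r : G.Walk x y) {f : Sym2 V} (hf : f ∈ r.edges)
    {v : V} (hv : v ∈ f) : v ∈ r.support := by
  obtain ⟨a, b, rfl⟩ := sym2_decomp f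
  rw [Sym2.mem_iff] at hv
  rcases hv with rfl | rfl
  · exact r.fst_mem_support_of_mem_edges hf
  · exact r.snd_mem_support_of_mem_edges hf

/-- in a path starting at `y`, the only edge containing `y` is the first edge -/
lemma path_start_edge_unique {y z x : V} (hyz : G.Adj y z) (r : G.Walk z x)
    (hp : (Walk.cons hyz r).IsPath) {f : Sym2 V} (hf : f ∈ (Walk.cons hyz r).edges)
    (hyf : y ∈ f) : f = s(y, z) := by
  rw [Walk.edges_cons, List.mem_cons] at hf
  rcases hf with rfl | hf
  · rfl
  · exfalso
    have : y ∈ r.support := mem_support_of_mem_edges' r hf hyf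
    exact ((Walk.cons_isPath_iff _ _).mp hp).2 this

/-- a dense multiset of edges contains a nonempty closed trail -/
lemma dense_closed_trail : ∀ (n : ℕ), ∀ (W : Finset V), W.card ≤ n →
    ∀ (m1 : Multiset (Sym2 V)), 0 < Multiset.card m1 →
    (∀ e ∈ m1, e ∈ G.edgeSet) → (∀ e ∈ m1, ∀ u ∈ e, u ∈ W) →
    W.card ≤ Multiset.card m1 →
    ∃ (x : V) (c : G.Walk x x), c.edges ≠ [] ∧ (c.edges : Multiset (Sym2 V)) ≤ m1 := by
  intro n
  induction n with
  | zero =>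
    intro W hW m1 hpos hE hend hcard
    exfalso
    obtain ⟨e, he⟩ := Multiset.exists_mem_of_ne_zero (Multiset.card_pos.mp hpos)
    obtain ⟨a, b, rfl⟩ := sym2_decomp e
    have : a ∈ W := hend _ he a (by simp)
    have hW0 : W = ∅ := Finset.card_eq_zero.mp (by omega)
    rw [hW0] at this
    simp at this
  | succ n ih =>
    intro W hW m1 hpos hE hend hcard
    by_cases hdup : ∃ e ∈ m1, 2 ≤ m1.count e
    · -- doubled edge: backtrack walk
      obtain ⟨e, hem, hc2⟩ := hdup
      obtain ⟨a, b, rfl⟩ := sym2_decomp e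
      have hadj : G.Adj a b := hE _ hem
      refine ⟨a, Walk.cons hadj (Walk.cons hadj.symm Walk.nil), by simp, ?_⟩
      have hedges : (Walk.cons hadj (Walk.cons hadj.symm Walk.nil)).edges
          = [s(a, b), s(a, b)] := by
        simp [Walk.edges_cons, Sym2.eq_swap]
      rw [hedges, Multiset.le_iff_count]
      intro f
      by_cases hf : f = s(a, b)
      · rw [hf, Multiset.coe_count]
        have h2 : List.count s(a, b) [s(a, b), s(a, b)] = 2 := by simp
        omega
      · rw [Multiset.coe_count]
        have h0 : List.count f [s(a, b), s(a, b)] = 0 := by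
          rw [List.count_eq_zero]
          intro hc
          simp only [List.mem_cons, List.mem_singleton, List.not_mem_nil, or_false] at hc
          rcases hc with h | h <;> exact hf h
        omega
    · push_neg at hdup
      have hnodup : m1.Nodup := by
        rw [Multiset.nodup_iff_count_le_one]
        intro e
        by_cases he : e ∈ m1
        · have := hdup e he; omega
        · rw [Multiset.count_eq_zero_of_notMem he]; omega
      by_cases hlow : ∃ v ∈ W, degM m1 v ≤ 1
      · obtain ⟨v, hvW, hdeg⟩ := hlow
        have hWv : (W.erase v).card = W.card - 1 := Finset.card_erase_of_mem hvW
        by_cases h0 : degM m1 v = 0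
        · -- drop the vertex
          refine ih (W.erase v) (by omega) m1 hpos hE ?_ ?_
          · intro e he u hu
            rw [Finset.mem_erase]
            refine ⟨?_, hend e he u hu⟩
            rintro rfl
            exact absurd (degM_pos_of_mem he hu) (by omega)
          · rw [hWv]; omega
        · -- degree one: drop the vertex and its edge
          have h1 : degM m1 v = 1 := by omega
          obtain ⟨e, hem, hve⟩ := Multiset.countP_pos.mp (show 0 < degM m1 v by omega)
          obtain ⟨a, b, rfl⟩ := sym2_decomp e
          have hW2 : 2 ≤ W.card := by
            have hne : a ≠ b := (hE _ hem).ne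
            have := Finset.one_lt_card.mpr ⟨a, hend _ hem a (by simp), b,
              hend _ hem b (by simp), hne⟩
            omega
          have hcarde : Multiset.card (m1.erase s(a,b)) = Multiset.card m1 - 1 :=
            Multiset.card_erase_of_mem hem
          have hend' : ∀ f ∈ m1.erase s(a,b), ∀ u ∈ f, u ∈ W.erase v := by
            intro f hf u hu
            rw [Finset.mem_erase]
            refine ⟨?_, hend f (Multiset.mem_of_mem_erase hf) u hu⟩
            rintro rfl
            by_cases hfe : f = s(a, b)
            · have hcnt : 2 ≤ m1.count s(a, b) := by
                have h1' : 1 ≤ (m1.erase s(a, b)).count s(a, b) :=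
                  Multiset.one_le_count_iff_mem.mpr (hfe ▸ hf)
                rw [Multiset.count_erase_self] at h1'
                omega
              have := hdup _ hem
              omega
            · have := deg_two_of_two_mem (fun hc => hfe hc.symm) hem
                (Multiset.mem_of_mem_erase hf) hve hu
              omega
          obtain ⟨x, c, hc1, hc2'⟩ := ih (W.erase v) (by rw [hWv]; omega)
            (m1.erase s(a,b)) (by rw [hcarde]; omega)
            (fun f hf => hE f (Multiset.mem_of_mem_erase hf)) hend' (by rw [hWv, hcarde]; omega)
          exact ⟨x, c, hc1, le_trans hc2' (Multiset.erase_le _ _)⟩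
      · -- minimum degree at least 2: grow a path until it closes up
        push_neg at hlow
        by_contra hno
        push_neg at hno
        have claim : ∀ ℓ : ℕ, ∃ (x y : V) (q : G.Walk y x), q.IsPath ∧ q.length = ℓ + 1 ∧
            ∀ e ∈ q.edges, e ∈ m1 := by
          intro ℓ
          induction ℓ with
          | zero =>
            obtain ⟨e, he⟩ := Multiset.exists_mem_of_ne_zero (Multiset.card_pos.mp hpos)
            obtain ⟨a, b, rfl⟩ := sym2_decomp e
            have hadj : G.Adj a b := hE _ he
            refine ⟨b, a, Walk.cons hadj Walk.nil, ?_, by simp, ?_⟩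
            · rw [Walk.cons_isPath_iff]
              exact ⟨Walk.IsPath.nil, by simp [hadj.ne]⟩
            · intro f hf
              simp only [Walk.edges_cons, Walk.edges_nil, List.mem_singleton] at hf
              subst hf
              exact he
          | succ ℓ ihl =>
            obtain ⟨x, y, q, hqp, hql, hqm⟩ := ihl
            cases q with
            | nil => simp at hql
            | @cons _ z _ hyz r =>
              have hyW : y ∈ W := hend _ (hqm s(y, z) (by simp)) y (by simp)
              have hdegy : 2 ≤ degM m1 y := by
                have := hlow y hyW
                omega
              obtain ⟨e1, e2, hne, he1, he2, hv1, hv2⟩ := two_distinct_of_deg hnodup hdegy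
              have hpick : ∃ e, e ∈ m1 ∧ y ∈ e ∧ e ≠ s(y, z) := by
                by_cases h : e1 = s(y, z)
                · exact ⟨e2, he2, hv2, fun hc => hne (h ▸ hc ▸ rfl)⟩
                · exact ⟨e1, he1, hv1, h⟩
              obtain ⟨e, hem, hye, hene⟩ := hpick
              obtain ⟨w, hwadj, rfl⟩ := mem_edge_decomp (hE e hem) hye
              by_cases hws : w ∈ (Walk.cons hyz r).support
              · -- close up: contradiction with hno
                exfalso
                set q1 := (Walk.cons hyz r).takeUntil w hws with hq1
                have hq1p : q1.IsPath := hqp.takeUntil hws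
                have hnm : s(w, y) ∉ q1.edges := by
                  intro hmem
                  have hmem' : s(w, y) ∈ (Walk.cons hyz r).edges :=
                    (Walk.edges_takeUntil_subset _ hws) hmem
                  have h3 : s(w, y) = s(y, z) :=
                    path_start_edge_unique hyz r hqp hmem' (by simp)
                  exact hene ((Sym2.eq_swap (a := y) (b := w)).trans h3)
                have hcnodup : (Walk.cons hwadj.symm q1).edges.Nodup := by
                  rw [Walk.edges_cons]
                  exact List.nodup_cons.mpr ⟨hnm, hq1p.isTrail.edges_nodup⟩
                have hcm : ∀ f ∈ (Walk.cons hwadj.symm q1).edges, f ∈ m1 := by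
                  intro f hf
                  rw [Walk.edges_cons, List.mem_cons] at hf
                  rcases hf with rfl | hf
                  · rwa [Sym2.eq_swap]
                  · exact hqm f ((Walk.edges_takeUntil_subset _ hws) hf)
                exact hno w (Walk.cons hwadj.symm q1) (by simp) (nodup_le hcnodup hcm)
              · -- extend the path
                refine ⟨x, w, Walk.cons hwadj.symm (Walk.cons hyz r), ?_, ?_, ?_⟩
                · rw [Walk.cons_isPath_iff]
                  exact ⟨hqp, hws⟩
                · simp only [Walk.length_cons] at hql ⊢
                  omega
                · intro f hf
                  rw [Walk.edges_cons, List.mem_cons] at hf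
                  rcases hf with rfl | hf
                  · rwa [Sym2.eq_swap]
                  · exact hqm f hf
        obtain ⟨x, y, q, hqp, hql, hqm⟩ := claim W.card
        have hsub : q.support.toFinset ⊆ W := by
          intro v hv
          rw [List.mem_toFinset] at hv
          obtain ⟨e, hee, hve⟩ := support_mem_edge q
            (by intro hc; rw [← Walk.length_edges, hc] at hql; simp at hql) hv
          exact hend e (hqm e hee) v hve
        have hlen : q.support.toFinset.card = q.length + 1 := by
          rw [List.toFinset_card_of_nodup hqp.support_nodup, Walk.length_support]
        have := Finset.card_le_card hsub
        omega


/-- the weight of a walk as a sum over the edge multiset -/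
noncomputable def eW (w : V → V → ℝ) (hsymm : ∀ u v, w u v = w v u) : Sym2 V → ℝ :=
  Sym2.lift ⟨w, fun x y => hsymm x y⟩

noncomputable def mweight (w : V → V → ℝ) (hsymm : ∀ u v, w u v = w v u)
    (m : Multiset (Sym2 V)) : ℝ := (m.map (eW w hsymm)).sum

lemma eW_nonneg {w : V → V → ℝ} {hsymm : ∀ u v, w u v = w v u} (hw : ∀ u v, 0 ≤ w u v)
    (e : Sym2 V) : 0 ≤ eW w hsymm e := by
  obtain ⟨a, b, rfl⟩ := sym2_decomp e
  simpa [eW] using hw a b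

lemma mweight_mono {w : V → V → ℝ} {hsymm : ∀ u v, w u v = w v u} (hw : ∀ u v, 0 ≤ w u v)
    {m' m : Multiset (Sym2 V)} (h : m' ≤ m) :
    mweight w hsymm m' ≤ mweight w hsymm m := by
  have hm : m' + (m - m') = m := by rw [add_comm]; exact tsub_add_cancel_of_le h
  have : mweight w hsymm m = mweight w hsymm m' + mweight w hsymm (m - m') := by
    rw [← hm, mweight, Multiset.map_add, Multiset.sum_add, ← mweight, ← mweight]
    rw [hm]
  rw [this]
  have h0 : 0 ≤ mweight w hsymm (m - m') := by
    apply Multiset.sum_nonneg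
    intro x hx
    obtain ⟨e, _, rfl⟩ := Multiset.mem_map.mp hx
    exact eW_nonneg hw e
  exact le_add_of_nonneg_right h0

lemma walkWeight_eq {w : V → V → ℝ} (hsymm : ∀ u v, w u v = w v u) {a b : V}
    (p : G.Walk a b) :
    walkWeight w p = mweight w hsymm (↑p.edges) := by
  induction p with
  | nil => simp [walkWeight, mweight]
  | cons h q ih =>
    rw [walkWeight, Walk.darts_cons, List.map_cons, List.sum_cons, ← walkWeight, ih]
    rw [Walk.edges_cons, ← Multiset.cons_coe]
    simp only [mweight, Multiset.map_cons, Multiset.sum_cons]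
    simp [eW]

lemma reach_end_cases {m : Multiset (Sym2 V)} {a b : V} (h : ReachM m a b) :
    a = b ∨ ∃ e ∈ m, b ∈ e := by
  rcases (Relation.ReflTransGen.cases_tail h) with h' | ⟨c, _, hcb⟩
  · exact Or.inl h'.symm
  · exact Or.inr ⟨s(c, b), hcb, by simp⟩

/-- the key reduction lemma: a long walk can be shortened without increasing its
edge multiset and without losing support vertices -/
lemma reduction {s t : V} (p : G.Walk s t)
    (hlen : 2 * (p.support.toFinset.card - 1) < p.length) :
    ∃ q : G.Walk s t, q.length < p.length ∧ (∀ v ∈ p.support, v ∈ q.support) ∧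
      (q.edges : Multiset (Sym2 V)) ≤ (p.edges : Multiset (Sym2 V)) := by
  set W := p.support.toFinset with hW
  set n0 := W.card with hn0
  have hn0pos : 1 ≤ n0 := by
    rw [hn0, hW]
    exact Finset.card_pos.mpr ⟨s, List.mem_toFinset.mpr p.start_mem_support⟩
  obtain ⟨F, hFle, hFcard, hFreach⟩ := first_entry_forest p
  have hpcard : Multiset.card (↑p.edges : Multiset (Sym2 V)) = p.length := by
    rw [Multiset.coe_card, Walk.length_edges]
  have hFcard' : Multiset.card F.val = n0 - 1 := hFcard
  set m1 : Multiset (Sym2 V) := ↑p.edges - F.val with hm1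
  have hm1card : Multiset.card m1 = p.length - (n0 - 1) := by
    rw [hm1, Multiset.card_sub hFle, hpcard, hFcard']
  have hm1big : n0 ≤ Multiset.card m1 := by
    rw [hm1card]; omega
  have hm1end : ∀ e ∈ m1, ∀ u ∈ e, u ∈ W := by
    intro e he u hu
    have : e ∈ (↑p.edges : Multiset (Sym2 V)) := Multiset.mem_of_le tsub_le_self he
    rw [hW, List.mem_toFinset]
    exact mem_support_of_mem_edges' p (by exact_mod_cast this) hu
  have hm1E : ∀ e ∈ m1, e ∈ G.edgeSet := by
    intro e he
    have : e ∈ (↑p.edges : Multiset (Sym2 V)) := Multiset.mem_of_le tsub_le_self he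
    exact p.edges_subset_edgeSet (by exact_mod_cast this)
  obtain ⟨x, c, hcne, hcle⟩ := dense_closed_trail W.card W le_rfl m1
    (by omega) hm1E hm1end hm1big
  set X : Multiset (Sym2 V) := ↑c.edges with hX
  have hXle : X ≤ (↑p.edges : Multiset (Sym2 V)) := le_trans hcle tsub_le_self
  set m' : Multiset (Sym2 V) := ↑p.edges - X with hm'
  have hadd : m' + X = ↑p.edges := tsub_add_cancel_of_le hXle
  have hFm' : F.val ≤ m' := by
    have h1 : F.val + m1 = ↑p.edges := by
      rw [hm1, add_comm, tsub_add_cancel_of_le hFle]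
    have h2 : m' = F.val + (m1 - X) := by
      rw [hm', ← h1, add_tsub_assoc_of_le hcle]
    rw [h2]
    exact Multiset.le_add_right _ _
  have hm'E : ∀ e ∈ m', e ∈ G.edgeSet := by
    intro e he
    have : e ∈ (↑p.edges : Multiset (Sym2 V)) := Multiset.mem_of_le tsub_le_self he
    exact p.edges_subset_edgeSet (by exact_mod_cast this)
  have hpar' : ∀ v, Odd (degM m' v) ↔ ((v = s ∨ v = t) ∧ s ≠ t) := by
    intro v
    have hdeg : degM (↑p.edges) v = degM m' v + degM X v := by
      rw [← hadd, degM_add]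
    have hev : Even (degM X v) := closed_walk_even c v
    have hp := walk_parity p v
    rw [← hp, hdeg, Nat.odd_iff, Nat.odd_iff]
    rw [Nat.even_iff] at hev
    omega
  have hconn' : ∀ e ∈ m', ∀ u ∈ e, ReachM m' s u := by
    intro e he u hu
    have hmem : e ∈ (↑p.edges : Multiset (Sym2 V)) := Multiset.mem_of_le tsub_le_self he
    have hsup : u ∈ p.support := mem_support_of_mem_edges' p (by exact_mod_cast hmem) hu
    exact ReachM.mono (fun f hf => Multiset.mem_of_le hFm' hf) (hFreach u hsup)
  obtain ⟨q, hq⟩ := euler_main m' hm'E hpar' hconn'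
  have hqlen : q.length < p.length := by
    have h1 : Multiset.card (↑q.edges : Multiset (Sym2 V)) = q.length := by
      rw [Multiset.coe_card, Walk.length_edges]
    have h2 : Multiset.card m' = p.length - Multiset.card X := by
      rw [hm', Multiset.card_sub hXle, hpcard]
    have h3 : 0 < Multiset.card X := by
      rw [hX, Multiset.coe_card]
      exact List.length_pos_iff.mpr hcne
    have h4 : Multiset.card X ≤ p.length := by
      have := Multiset.card_le_card hXle
      rwa [hpcard] at this
    rw [hq, h2] at h1
    omega
  refine ⟨q, hqlen, ?_, by rw [hq, hm']; exact tsub_le_self⟩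
  intro v hv
  rcases reach_end_cases (hFreach v hv) with rfl | ⟨e, heF, hve⟩
  · exact q.start_mem_support
  · have : e ∈ (↑q.edges : Multiset (Sym2 V)) := by
      rw [hq]
      exact Multiset.mem_of_le hFm' heF
    exact mem_support_of_mem_edges' q (by exact_mod_cast this) hve

lemma exists_through_list (hconn : G.Connected) (s t : V) (l : List V) :
    ∃ p : G.Walk s t, ∀ v ∈ l, v ∈ p.support := by
  induction l with
  | nil =>
    obtain ⟨p⟩ := hconn.preconnected s t
    exact ⟨p, by simp⟩
  | cons v l ih =>
    obtain ⟨p, hp⟩ := ih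
    obtain ⟨r⟩ := hconn.preconnected s v
    refine ⟨r.append (r.reverse.append p), ?_⟩
    intro u hu
    rw [List.mem_cons] at hu
    rcases hu with rfl | hu
    · rw [Walk.mem_support_append_iff]
      left
      exact r.end_mem_support
    · rw [Walk.mem_support_append_iff, Walk.mem_support_append_iff]
      right; right
      exact hp u hu

end GSAux

/-- For every pair `s,t` there is a group Steiner path with at most
`2(n-1)` edges whose length equals the group Steiner distance; in particular the infimum
defining `σ_G(s,t)` is attained. -/
theorem stmt_4 {V : Type*} [Fintype V] (G : SimpleGraph V) (hconn : G.Connected)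
    (w : V → V → ℝ) (hw : ∀ u v, 0 ≤ w u v) (hsymm : ∀ u v, w u v = w v u)
    {k : ℕ} (R : Fin k → Set V) (hR : ∀ i, (R i).Nonempty)
    (s t : V) :
    ∃ π : G.Walk s t, IsGroupSteiner R π ∧ π.length ≤ 2 * (Fintype.card V - 1) ∧
      ENNReal.ofReal (walkWeight w π) = gsDist G w R s t := by
  classical
  have key : ∀ (L : ℕ) (p : G.Walk s t), p.length ≤ L → IsGroupSteiner R p →
      ∃ q : G.Walk s t, IsGroupSteiner R q ∧ q.length ≤ 2 * (Fintype.card V - 1) ∧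
        walkWeight w q ≤ walkWeight w p := by
    intro L
    induction L with
    | zero =>
      intro p hp hgs
      exact ⟨p, hgs, by omega, le_rfl⟩
    | succ L ih =>
      intro p hp hgs
      by_cases hlen : p.length ≤ 2 * (Fintype.card V - 1)
      · exact ⟨p, hgs, hlen, le_rfl⟩
      · have hred : 2 * (p.support.toFinset.card - 1) < p.length := by
          have h1 : p.support.toFinset.card ≤ Fintype.card V := Finset.card_le_univ _
          omega
        obtain ⟨q, hqlen, hqsup, hqle⟩ := GSAux.reduction p hred
        have hqgs : IsGroupSteiner R q := fun i => by
          obtain ⟨x, hx1, hx2⟩ := hgs i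
          exact ⟨x, hx1, hqsup x hx2⟩
        have hqw : walkWeight w q ≤ walkWeight w p := by
          rw [GSAux.walkWeight_eq hsymm, GSAux.walkWeight_eq hsymm]
          exact GSAux.mweight_mono hw hqle
        obtain ⟨q', h1, h2, h3⟩ := ih q (by omega) hqgs
        exact ⟨q', h1, h2, h3.trans hqw⟩
  choose xs hxs using hR
  obtain ⟨p0, hp0⟩ := GSAux.exists_through_list hconn s t (List.ofFn xs)
  have hp0gs : IsGroupSteiner R p0 :=
    fun i => ⟨xs i, hxs i, hp0 _ ((List.mem_ofFn).mpr ⟨i, rfl⟩)⟩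
  obtain ⟨q0, hq0gs, hq0len, _⟩ := key p0.length p0 le_rfl hp0gs
  set N := 2 * (Fintype.card V - 1) with hN
  set S : Finset (G.Walk s t) :=
    (Finset.range (N+1)).biUnion (fun n => G.finsetWalkLength n s t) with hS
  have hmemS : ∀ q : G.Walk s t, q ∈ S ↔ q.length ≤ N := by
    intro q
    rw [hS, Finset.mem_biUnion]
    constructor
    · rintro ⟨n, hn, hq⟩
      rw [SimpleGraph.mem_finsetWalkLength_iff] at hq
      rw [Finset.mem_range] at hn
      omega
    · intro h
      exact ⟨q.length, Finset.mem_range.mpr (by omega),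
        SimpleGraph.mem_finsetWalkLength_iff.mpr rfl⟩
  set T := S.filter (fun q => IsGroupSteiner R q) with hT
  have hq0T : q0 ∈ T := by
    rw [hT, Finset.mem_filter]
    exact ⟨(hmemS q0).mpr hq0len, hq0gs⟩
  have hTne : ∃ x, x ∈ T := ⟨q0, hq0T⟩
  obtain ⟨π, hπT, hπmin⟩ := Finset.exists_min_image T (fun q => walkWeight w q) hTne
  rw [hT, Finset.mem_filter] at hπT
  obtain ⟨hπS, hπgs⟩ := hπT
  refine ⟨π, hπgs, (hmemS π).mp hπS, ?_⟩
  apply le_antisymm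
  · rw [gsDist]
    refine le_iInf fun q => ?_
    obtain ⟨q, hq⟩ := q
    obtain ⟨q', h1, h2, h3⟩ := key q.length q le_rfl hq
    have h4 : walkWeight w π ≤ walkWeight w q' := by
      apply hπmin
      rw [hT, Finset.mem_filter]
      exact ⟨(hmemS q').mpr h2, h1⟩
    exact ENNReal.ofReal_le_ofReal (h4.trans h3)
  · rw [gsDist]
    exact iInf_le
      (fun p : {p : G.Walk s t // IsGroupSteiner R p} => ENNReal.ofReal (walkWeight w p.1))
      ⟨π, hπgs⟩
end

section
/- Let T be a tree with non-negative real edge weights, let w(T) denote the total weight of its edges, and let W > 0. Then there exists a collection of at most 2·(w(T)/W + 1) pairwise edge-disjoint subtrees of T ('micro-trees'), each of total edge weight at most W, whose union contains every vertex of T. -/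
open SimpleGraph ENNReal

/-- Total weight of a set of edges (for a symmetric weight function). -/
noncomputable def edgesWeight {V : Type*} (w : V → V → ℝ) (hs : ∀ a b, w a b = w b a)
    (E : Set (Sym2 V)) : ℝ :=
  ∑ᶠ e ∈ E, Sym2.lift ⟨w, hs⟩ e

section PathInfra
variable {V : Type*} [DecidableEq V] {T : SimpleGraph V} {r : V}
variable (P : ∀ x : V, T.Walk x r)

/-- parent of a vertex: second vertex on its path to the root. -/
def par (x : V) : V := (P x).getVert 1

variable (hA : T.IsAcyclic) (hP : ∀ x, (P x).IsPath)

include hA in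
lemma uniqP {x y : V} (p q : T.Walk x y) (hp : p.IsPath) (hq : q.IsPath) : p = q := by
  have := hA.path_unique ⟨p, hp⟩ ⟨q, hq⟩
  exact congrArg Subtype.val this

include hA hP in
lemma P_r : P r = Walk.nil := uniqP hA _ _ (hP r) Walk.IsPath.nil

include hA hP in
lemma dropP {x y : V} (h : y ∈ (P x).support) : (P x).dropUntil y h = P y :=
  uniqP hA _ _ ((hP x).dropUntil h) (hP y)

include hA hP in
lemma supP_trans {x y : V} (h : y ∈ (P x).support) :
    ∀ z ∈ (P y).support, z ∈ (P x).support := by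
  intro z hz
  rw [← dropP P hA hP h] at hz
  exact Walk.support_dropUntil_subset _ h hz

include hA hP in
lemma P_take_spec {x y : V} (h : y ∈ (P x).support) :
    ((P x).takeUntil y h).append (P y) = P x := by
  conv_rhs => rw [← Walk.take_spec (P x) h]
  rw [dropP P hA hP h]

include hA hP in
lemma antisymP {x y : V} (hxy : y ∈ (P x).support) (hyx : x ∈ (P y).support) : x = y := by
  have h1 := P_take_spec P hA hP hxy
  have h2 := P_take_spec P hA hP hyx
  have l1 := congrArg Walk.length h1
  have l2 := congrArg Walk.length h2
  rw [Walk.length_append] at l1 l2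
  have : ((P x).takeUntil y hxy).length = 0 := by omega
  exact Walk.eq_of_length_eq_zero this
end PathInfra

set_option linter.unusedSectionVars false

section PathInfra2
variable {V : Type*} [DecidableEq V] {T : SimpleGraph V} {r : V}
variable (P : ∀ x : V, T.Walk x r) (hA : T.IsAcyclic) (hP : ∀ x, (P x).IsPath)

include hA hP in
lemma beforeP {x y z : V} (h : y ∈ (P x).support)
    (hz : z ∈ ((P x).takeUntil y h).support) : y ∈ (P z).support := by
  classical
  set t := (P x).takeUntil y h with ht
  have htp : t.IsPath := (hP x).takeUntil h
  have hq : (t.dropUntil z hz).IsPath := htp.dropUntil hz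
  -- the candidate path from z to r through y
  have hdisj : ∀ u ∈ t.support, u ∉ (P y).support.tail := by
    have hnd : ((P x).support).Nodup := (hP x).2
    have hsp : (P x).support = t.support ++ ((P x).dropUntil y h).support.tail := by
      conv_lhs => rw [← Walk.take_spec (P x) h]
      rw [Walk.support_append]
    rw [hsp] at hnd
    have := (List.nodup_append'.mp hnd).2.2
    intro u hu hu'
    rw [dropP P hA hP h] at this
    exact this hu hu'
  have hwp : ((t.dropUntil z hz).append (P y)).IsPath := by
    rw [Walk.isPath_def, Walk.support_append, List.nodup_append']
    refine ⟨hq.2, ?_, ?_⟩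
    · exact (hP y).2.sublist (List.tail_sublist _)
    · intro u hu hu'
      exact hdisj u (Walk.support_dropUntil_subset _ hz hu) hu'
  have := uniqP hA _ _ hwp (hP z)
  rw [← this]
  rw [Walk.mem_support_append_iff]
  left
  exact Walk.end_mem_support _

include hA hP in
lemma comparableP {x y z : V} (hy : y ∈ (P x).support) (hz : z ∈ (P x).support) :
    y ∈ (P z).support ∨ z ∈ (P y).support := by
  classical
  have := P_take_spec P hA hP hy
  rw [← this, Walk.mem_support_append_iff] at hz
  rcases hz with hz | hz
  · exact Or.inl (beforeP P hA hP hy hz)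
  · exact Or.inr hz

include hA hP in
lemma Pcons {x : V} (hx : x ≠ r) :
    ∃ h : T.Adj x (par P x), P x = Walk.cons h (P (par P x)) := by
  obtain ⟨y, hadj, p', hp'⟩ := Walk.exists_eq_cons_of_ne hx (P x)
  have hy : par P x = y := by
    unfold par; rw [hp']
    rw [Walk.getVert_cons_succ, Walk.getVert_zero]
  subst hy
  have : p' = P (par P x) := by
    apply uniqP hA _ _ _ (hP _)
    have := hP x
    rw [hp'] at this
    exact this.of_cons
  exact ⟨hadj, by rw [hp', this]⟩

include hA hP in
lemma par_r : par P r = r := by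
  unfold par
  rw [P_r P hA hP]
  rfl

include hA hP in
lemma supP_par {x : V} (hx : x ≠ r) :
    (P x).support = x :: (P (par P x)).support := by
  obtain ⟨h, hc⟩ := Pcons P hA hP hx
  rw [hc, Walk.support_cons]

include hA hP in
lemma not_mem_supP_par {x : V} (hx : x ≠ r) : x ∉ (P (par P x)).support := by
  have hnd := (hP x).2
  rw [supP_par P hA hP hx] at hnd
  exact (List.nodup_cons.mp hnd).1
end PathInfra2

section PathInfra3
variable {V : Type*} [DecidableEq V] {T : SimpleGraph V} {r : V}
variable (P : ∀ x : V, T.Walk x r) (hA : T.IsAcyclic) (hP : ∀ x, (P x).IsPath)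

include hA hP in
lemma adj_par {x : V} (hx : x ≠ r) : T.Adj x (par P x) := (Pcons P hA hP hx).choose

include hA hP in
lemma ne_r_of_adj {x y : V} (h : T.Adj x y) (hpar : par P x = y) : x ≠ r := by
  intro hx
  subst hx
  rw [par_r P hA hP] at hpar
  subst hpar
  exact T.loopless.irrefl _ h

include hA hP in
lemma adj_parent {x y : V} (h : T.Adj x y) : par P x = y ∨ par P y = x := by
  classical
  by_cases hy : y ∈ (P x).support
  · left
    have hxy : x ≠ y := h.ne
    have hc : (Walk.cons h (Walk.nil : T.Walk y y)).IsPath := by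
      rw [Walk.isPath_def]
      simp [hxy]
    have ht : (P x).takeUntil y hy = Walk.cons h Walk.nil :=
      uniqP hA _ _ ((hP x).takeUntil hy) hc
    have := P_take_spec P hA hP hy
    rw [ht] at this
    simp only [Walk.cons_append, Walk.nil_append] at this
    unfold par
    rw [← this, Walk.getVert_cons_succ, Walk.getVert_zero]
  · right
    have hc : (Walk.cons h.symm (P x)).IsPath := (hP x).cons hy
    have := uniqP hA _ _ hc (hP y)
    unfold par
    rw [← this, Walk.getVert_cons_succ, Walk.getVert_zero]

include hA hP in
lemma no2cycle {x y : V} (hx : x ≠ r) (hy : y ≠ r) (h1 : par P x = y) (h2 : par P y = x) :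
    False := by
  obtain ⟨hax, hcx⟩ := Pcons P hA hP hx
  obtain ⟨hay, hcy⟩ := Pcons P hA hP hy
  have e1 : (P (par P x)).length = (P y).length := by rw [h1]
  have e2 : (P (par P y)).length = (P x).length := by rw [h2]
  have l1 : (P x).length = (P y).length + 1 := by
    rw [hcx, Walk.length_cons, e1]
  have l2 : (P y).length = (P x).length + 1 := by
    rw [hcy, Walk.length_cons, e2]
  omega

include hA hP in
lemma child_ne_r {u v : V} (h1 : par P u = v) (h2 : u ≠ v) : u ≠ r := by
  intro hu; subst hu
  rw [par_r P hA hP] at h1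
  exact h2 h1

include hA hP in
lemma child_not_mem {u v : V} (h1 : par P u = v) (h2 : u ≠ v) : u ∉ (P v).support := by
  have hur := child_ne_r P hA hP h1 h2
  have := not_mem_supP_par P hA hP hur
  rwa [h1] at this

include hA hP in
lemma mem_supP_of_par {u v : V} (h1 : par P u = v) (h2 : u ≠ v) : v ∈ (P u).support := by
  have hur := child_ne_r P hA hP h1 h2
  rw [supP_par P hA hP hur, h1]
  exact List.mem_cons_of_mem _ (Walk.start_mem_support _)

include hA hP in
lemma descend {x v : V} (hv : v ∈ (P x).support) (hne : v ≠ x) :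
    ∃ u, par P u = v ∧ u ≠ v ∧ u ∈ (P x).support := by
  classical
  obtain ⟨n, hn⟩ : ∃ n, (P x).length = n := ⟨_, rfl⟩
  induction n using Nat.strong_induction_on generalizing x with
  | _ n ih =>
    have hx : x ≠ r := by
      intro hx
      have hsup : (P x).support = [r] := by
        rw [hx, P_r P hA hP, Walk.support_nil]
      rw [hsup, List.mem_singleton] at hv
      rw [hx] at hne
      exact hne hv
    obtain ⟨hadj, hc⟩ := Pcons P hA hP hx
    rw [hc, Walk.support_cons] at hv
    rcases List.mem_cons.mp hv with h | h
    · exact absurd h hne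
    · by_cases hvp : v = par P x
      · refine ⟨x, hvp.symm ▸ rfl, fun hh => hne (hh ▸ rfl), Walk.start_mem_support _⟩
      · have hlen : (P (par P x)).length < n := by
          have := congrArg Walk.length hc
          rw [Walk.length_cons] at this
          omega
        obtain ⟨u, hu1, hu2, hu3⟩ := ih _ hlen (x := par P x) h hvp rfl
        refine ⟨u, hu1, hu2, ?_⟩
        rw [hc, Walk.support_cons]
        exact List.mem_cons_of_mem _ hu3

include hA hP in
lemma child_unique {x v u u' : V} (h1 : par P u = v) (h2 : u ≠ v) (h1' : par P u' = v)
    (h2' : u' ≠ v) (hu : u ∈ (P x).support) (hu' : u' ∈ (P x).support) : u = u' := by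
  rcases comparableP P hA hP hu hu' with h | h
  · -- u ∈ (P u').support
    by_cases he : u = u'
    · exact he
    · exfalso
      have hur' := child_ne_r P hA hP h1' h2'
      rw [supP_par P hA hP hur', h1'] at h
      rcases List.mem_cons.mp h with hh | hh
      · exact he hh
      · exact child_not_mem P hA hP h1 h2 hh
  · by_cases he : u = u'
    · exact he
    · exfalso
      have hur := child_ne_r P hA hP h1 h2
      rw [supP_par P hA hP hur, h1] at h
      rcases List.mem_cons.mp h with hh | hh
      · exact he hh.symm
      · exact child_not_mem P hA hP h1' h2' hh
end PathInfra3

section FinsetLayer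
variable {V : Type*} [DecidableEq V] {T : SimpleGraph V} {r : V}
variable (P : ∀ x : V, T.Walk x r)

/-- Vertices of `U` whose root path passes through `u` (the branch of `u` inside `U`). -/
def descIn (U : Finset V) (u : V) : Finset V := U.filter (fun x => u ∈ (P x).support)

/-- `U` is closed under taking root paths. -/
def GoodF (U : Finset V) : Prop := r ∈ U ∧ ∀ x ∈ U, ∀ y ∈ (P x).support, y ∈ U

lemma mem_descIn {U : Finset V} {u x : V} :
    x ∈ descIn P U u ↔ x ∈ U ∧ u ∈ (P x).support := by
  simp [descIn]

variable (hA : T.IsAcyclic) (hP : ∀ x, (P x).IsPath)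

/-- children of `v` inside `U`. -/
def childIn (U : Finset V) (v : V) : Finset V := U.filter (fun u => par P u = v ∧ u ≠ v)

lemma mem_childIn {U : Finset V} {v u : V} :
    u ∈ childIn P U v ↔ u ∈ U ∧ par P u = v ∧ u ≠ v := by simp [childIn]

include hA hP in
lemma descIn_child_subset {U : Finset V} {v u : V} (hu : u ∈ childIn P U v) :
    descIn P U u ⊆ (descIn P U v).erase v := by
  rw [mem_childIn] at hu
  intro x hx
  rw [mem_descIn] at hx
  rw [Finset.mem_erase, mem_descIn]
  have hvSu : v ∈ (P u).support := mem_supP_of_par P hA hP hu.2.1 hu.2.2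
  refine ⟨?_, hx.1, supP_trans P hA hP hx.2 v hvSu⟩
  intro hxv; subst hxv
  exact child_not_mem P hA hP hu.2.1 hu.2.2 hx.2

include hA hP in
lemma descIn_erase_eq_biUnion {U : Finset V} (hG : GoodF (r := r) P U) (v : V) :
    (descIn P U v).erase v = (childIn P U v).biUnion (fun u => descIn P U u) := by
  apply Finset.Subset.antisymm
  · intro x hx
    rw [Finset.mem_erase, mem_descIn] at hx
    obtain ⟨hxv, hxU, hvS⟩ := hx
    obtain ⟨u, hu1, hu2, hu3⟩ := descend P hA hP hvS (Ne.symm hxv)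
    rw [Finset.mem_biUnion]
    refine ⟨u, ?_, ?_⟩
    · rw [mem_childIn]
      exact ⟨hG.2 x hxU u hu3, hu1, hu2⟩
    · rw [mem_descIn]; exact ⟨hxU, hu3⟩
  · intro x hx
    rw [Finset.mem_biUnion] at hx
    obtain ⟨u, hu, hx⟩ := hx
    exact descIn_child_subset P hA hP hu hx

include hA hP in
lemma childIn_pairwiseDisjoint {U : Finset V} (v : V) :
    (↑(childIn P U v) : Set V).PairwiseDisjoint (fun u => descIn P U u) := by
  intro u hu u' hu' hne
  simp only [Finset.coe_mem, Finset.mem_coe, mem_childIn] at hu hu'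
  rw [Function.onFun_apply, Finset.disjoint_left]
  intro x hx hx'
  rw [mem_descIn] at hx hx'
  exact hne (child_unique P hA hP hu.2.1 hu.2.2 hu'.2.1 hu'.2.2 hx.2 hx'.2)

include hA hP in
lemma sum_descIn_erase {U : Finset V} (hG : GoodF (r := r) P U) (v : V) (g : V → ℝ) :
    ∑ x ∈ (descIn P U v).erase v, g x
      = ∑ u ∈ childIn P U v, ∑ x ∈ descIn P U u, g x := by
  rw [descIn_erase_eq_biUnion P hA hP hG v]
  exact Finset.sum_biUnion (childIn_pairwiseDisjoint P hA hP v)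

include hA hP in
lemma self_mem_descIn {U : Finset V} {u : V} (hu : u ∈ U) : u ∈ descIn P U u := by
  rw [mem_descIn]; exact ⟨hu, Walk.start_mem_support _⟩
end FinsetLayer

section Conn
variable {V : Type*} {T : SimpleGraph V}

lemma reach_in_induce {A : Set V} : ∀ {x b : V} (p : T.Walk x b),
    (∀ y ∈ p.support, y ∈ A) →
    ∀ (hx : x ∈ A) (hb : b ∈ A),
    ((⊤ : T.Subgraph).induce A).coe.Reachable ⟨x, hx⟩ ⟨b, hb⟩ := by
  intro x b p
  induction p with
  | nil => intro _ hx hb; rfl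
  | @cons x y b h q ih =>
    intro hsup hx hb
    have hy : y ∈ A := hsup y (by rw [Walk.support_cons]; exact List.mem_cons_of_mem _ (Walk.start_mem_support _))
    have hadj : ((⊤ : T.Subgraph).induce A).coe.Adj ⟨x, hx⟩ ⟨y, hy⟩ := by
      simp only [Subgraph.coe_adj, Subgraph.induce_adj, Subgraph.top_adj]
      exact ⟨hx, hy, h⟩
    refine hadj.reachable.trans (ih ?_ hy hb)
    intro z hz
    exact hsup z (by rw [Walk.support_cons]; exact List.mem_cons_of_mem _ hz)

lemma induce_connected_of_walks [DecidableEq V] {A : Finset V} {a : V} (ha : a ∈ A)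
    (hw : ∀ x ∈ A, ∃ p : T.Walk x a, ∀ y ∈ p.support, y ∈ A) :
    ((⊤ : T.Subgraph).induce (↑A : Set V)).Connected := by
  rw [Subgraph.connected_iff]
  constructor
  · constructor
    intro u v
    obtain ⟨x, hx⟩ := u
    obtain ⟨y, hy⟩ := v
    simp only [Subgraph.induce_verts, Finset.mem_coe] at hx hy
    obtain ⟨p, hp⟩ := hw x hx
    obtain ⟨q, hq⟩ := hw y hy
    have r1 := reach_in_induce (A := (↑A : Set V)) p (fun z hz => hp z hz) hx ha
    have r2 := reach_in_induce (A := (↑A : Set V)) q (fun z hz => hq z hz) hy ha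
    exact r1.trans r2.symm
  · exact ⟨a, ha⟩
end Conn

section Weight
variable {V : Type*} [DecidableEq V] {T : SimpleGraph V} {r : V}
variable (P : ∀ x : V, T.Walk x r) (hA : T.IsAcyclic) (hP : ∀ x, (P x).IsPath)

include hA hP in
lemma induce_edgeSet_eq {A : Finset V} {a : V}
    (h1 : ∀ x ∈ A, x ≠ a → par P x ∈ A ∧ x ≠ r)
    (h2 : a = r ∨ par P a ∉ A) :
    ((⊤ : T.Subgraph).induce (↑A : Set V)).edgeSet
      = ↑((A.erase a).image (fun x => s(x, par P x))) := by
  ext e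
  refine Sym2.ind (fun x y => ?_) e
  simp only [Subgraph.mem_edgeSet, Subgraph.induce_adj, Subgraph.top_adj, Finset.coe_image,
    Set.mem_image, Finset.mem_coe, Finset.mem_erase]
  constructor
  · rintro ⟨hx, hy, hadj⟩
    rcases adj_parent P hA hP hadj with hpx | hpy
    · have hxr : x ≠ r := ne_r_of_adj P hA hP hadj hpx
      have hxa : x ≠ a := by
        rintro rfl
        rcases h2 with h2 | h2
        · exact hxr h2
        · rw [hpx] at h2; exact h2 hy
      exact ⟨x, ⟨hxa, hx⟩, by rw [hpx]⟩
    · have hyr : y ≠ r := ne_r_of_adj P hA hP hadj.symm hpy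
      have hya : y ≠ a := by
        rintro rfl
        rcases h2 with h2 | h2
        · exact hyr h2
        · rw [hpy] at h2; exact h2 hx
      exact ⟨y, ⟨hya, hy⟩, by rw [hpy, Sym2.eq_swap]⟩
  · rintro ⟨z, ⟨hza, hzA⟩, hze⟩
    obtain ⟨hparA, hzr⟩ := h1 z hzA hza
    have hadj : T.Adj z (par P z) := adj_par P hA hP hzr
    rw [Sym2.eq_iff] at hze
    rcases hze with ⟨rfl, rfl⟩ | ⟨rfl, rfl⟩
    · exact ⟨hzA, hparA, hadj⟩
    · exact ⟨hparA, hzA, hadj.symm⟩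

variable (w : V → V → ℝ) (hsymm : ∀ a b, w a b = w b a)

include hA hP in
lemma induce_weight_eq {A : Finset V} {a : V}
    (h1 : ∀ x ∈ A, x ≠ a → par P x ∈ A ∧ x ≠ r)
    (h2 : a = r ∨ par P a ∉ A) :
    edgesWeight w hsymm ((⊤ : T.Subgraph).induce (↑A : Set V)).edgeSet
      = ∑ x ∈ A.erase a, w x (par P x) := by
  rw [edgesWeight, induce_edgeSet_eq P hA hP h1 h2, finsum_mem_coe_finset]
  rw [Finset.sum_image ?hinj]
  · exact Finset.sum_congr rfl (fun x _ => Sym2.lift_mk _ _ _)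
  case hinj =>
    intro x hx y hy hxy
    rw [Sym2.eq_iff] at hxy
    rcases hxy with ⟨h, _⟩ | ⟨hxy1, hxy2⟩
    · exact h
    · by_cases hxyeq : x = y
      · exact hxyeq
      · exfalso
        rw [Finset.mem_coe, Finset.mem_erase] at hx hy
        have hxr := (h1 x hx.2 hx.1).2
        have hyr := (h1 y hy.2 hy.1).2
        exact no2cycle P hA hP hxr hyr hxy2 hxy1.symm
end Weight

lemma exists_prefix {α : Type*} [DecidableEq α] (s : Finset α) (g : α → ℝ) {W : ℝ}
    (hW : 0 < W) (h2 : ∀ a ∈ s, g a ≤ W / 2) (hs : W / 2 < ∑ a ∈ s, g a) :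
    ∃ J, J ⊆ s ∧ W / 2 < ∑ a ∈ J, g a ∧ ∑ a ∈ J, g a ≤ W := by
  classical
  set t := s.powerset.filter (fun J => W / 2 < ∑ a ∈ J, g a) with ht
  have hts : s ∈ t := by
    rw [ht, Finset.mem_filter, Finset.mem_powerset]
    exact ⟨Finset.Subset.refl _, hs⟩
  obtain ⟨J, hJt, hJmin⟩ := Finset.exists_min_image t Finset.card ⟨s, hts⟩
  rw [ht, Finset.mem_filter, Finset.mem_powerset] at hJt
  obtain ⟨hJs, hJw⟩ := hJt
  have hJne : J.Nonempty := by
    rcases Finset.eq_empty_or_nonempty J with h | h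
    · rw [h, Finset.sum_empty] at hJw; linarith
    · exact h
  obtain ⟨j, hj⟩ := hJne
  have herase : ¬ (W / 2 < ∑ a ∈ J.erase j, g a) := by
    intro hcon
    have hmem : J.erase j ∈ t := by
      rw [ht, Finset.mem_filter, Finset.mem_powerset]
      exact ⟨(Finset.erase_subset _ _).trans hJs, hcon⟩
    have := hJmin _ hmem
    have hlt := Finset.card_erase_lt_of_mem hj
    omega
  push_neg at herase
  have hsumJ : ∑ a ∈ J.erase j, g a + g j = ∑ a ∈ J, g a := Finset.sum_erase_add _ _ hj
  have hgj : g j ≤ W / 2 := h2 j (hJs hj)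
  exact ⟨J, hJs, hJw, by linarith⟩

section Cut
variable {V : Type*} [DecidableEq V] {T : SimpleGraph V} {r : V}
variable (P : ∀ x : V, T.Walk x r) (hA : T.IsAcyclic) (hP : ∀ x, (P x).IsPath)

include hA hP in
lemma branch_ne_r {U : Finset V} {u x : V} (hur : u ≠ r) (hx : x ∈ descIn P U u) : x ≠ r := by
  rintro rfl
  rw [mem_descIn] at hx
  have := hx.2
  rw [P_r P hA hP, Walk.support_nil, List.mem_singleton] at this
  exact hur this

include hA hP in
lemma branch_closed {U : Finset V} (hG : GoodF (r := r) P U) {u x : V} (hur : u ≠ r)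
    (hx : x ∈ descIn P U u) (hxu : x ≠ u) : par P x ∈ descIn P U u ∧ x ≠ r := by
  have hxr : x ≠ r := branch_ne_r P hA hP hur hx
  rw [mem_descIn] at hx
  obtain ⟨hxU, huS⟩ := hx
  have hparS : par P x ∈ (P x).support := by
    rw [supP_par P hA hP hxr]
    exact List.mem_cons_of_mem _ (Walk.start_mem_support _)
  have hUp : par P x ∈ U := hG.2 x hxU _ hparS
  have huSp : u ∈ (P (par P x)).support := by
    have := huS
    rw [supP_par P hA hP hxr] at this
    rcases List.mem_cons.mp this with h | h
    · exact absurd h.symm hxu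
    · exact h
  exact ⟨mem_descIn P |>.mpr ⟨hUp, huSp⟩, hxr⟩

include hA hP in
lemma branch_walk {U : Finset V} (hG : GoodF (r := r) P U) {u x : V}
    (hx : x ∈ descIn P U u) : ∃ p : T.Walk x u, ∀ y ∈ p.support, y ∈ descIn P U u := by
  rw [mem_descIn] at hx
  obtain ⟨hxU, huS⟩ := hx
  refine ⟨(P x).takeUntil u huS, fun y hy => ?_⟩
  have hyS : y ∈ (P x).support := Walk.support_takeUntil_subset _ huS hy
  rw [mem_descIn]
  exact ⟨hG.2 x hxU y hyS, beforeP P hA hP huS hy⟩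

include hA hP in
lemma branch_downclosed {U : Finset V} {u : V} :
    ∀ x ∈ U, ∀ y ∈ descIn P U u, y ∈ (P x).support → x ∈ descIn P U u := by
  intro x hxU y hy hyS
  rw [mem_descIn] at hy ⊢
  exact ⟨hxU, supP_trans P hA hP hyS u hy.2⟩

variable (w : V → V → ℝ) (hw : ∀ u v, 0 ≤ w u v) {W : ℝ}

include hA hP hw in
lemma cutLemma (hW : 0 < W) : ∀ (n : ℕ) (U : Finset V) (v : V), (descIn P U v).card ≤ n →
    GoodF (r := r) P U → v ∈ U →
    W / 2 < ∑ x ∈ (descIn P U v).erase v, w x (par P x) →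
    ∃ (A R : Finset V) (a : V),
      R ⊆ (descIn P U v).erase v ∧
      W / 2 < ∑ x ∈ R, w x (par P x) ∧
      R ⊆ A ∧ A ⊆ insert a R ∧ a ∈ A ∧ A ⊆ U ∧
      (∀ x ∈ A, x ≠ a → par P x ∈ A ∧ x ≠ r) ∧
      (a = r ∨ par P a ∉ A) ∧
      (∑ x ∈ A.erase a, w x (par P x)) ≤ W ∧
      (∀ x ∈ A, ∃ p : T.Walk x a, ∀ y ∈ p.support, y ∈ A) ∧
      (∀ x ∈ U, ∀ y ∈ R, y ∈ (P x).support → x ∈ R) := by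
  intro n
  induction n using Nat.strong_induction_on with
  | _ n ih =>
  intro U v hcard hG hv hwt
  set f : V → ℝ := fun x => w x (par P x) with hf
  have hsum : ∑ x ∈ (descIn P U v).erase v, f x
      = ∑ u ∈ childIn P U v, ∑ x ∈ descIn P U u, f x :=
    sum_descIn_erase P hA hP hG v f
  by_cases hcase1 : ∃ u ∈ childIn P U v, W / 2 < ∑ x ∈ (descIn P U u).erase u, f x
  · -- recurse deeper
    obtain ⟨u, hu, huw⟩ := hcase1
    have husub : descIn P U u ⊆ (descIn P U v).erase v := descIn_child_subset P hA hP hu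
    have hvd : v ∈ descIn P U v := self_mem_descIn P hA hP hv
    have hcard' : (descIn P U u).card < (descIn P U v).card := by
      calc (descIn P U u).card ≤ ((descIn P U v).erase v).card := Finset.card_le_card husub
        _ < (descIn P U v).card := Finset.card_erase_lt_of_mem hvd
    have hn : 1 ≤ n := by
      have : 1 ≤ (descIn P U v).card := Finset.card_pos.mpr ⟨v, hvd⟩
      omega
    have huU : u ∈ U := (mem_childIn P |>.mp hu).1
    obtain ⟨A, R, a, c1, c2, c3, c4, c5, c6, c7, c8, c9, c10, c11⟩ :=
      ih (n - 1) (by omega) U u (by omega) hG huU huw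
    refine ⟨A, R, a, ?_, c2, c3, c4, c5, c6, c7, c8, c9, c10, c11⟩
    exact (c1.trans (Finset.erase_subset _ _)).trans husub
  · push_neg at hcase1
    by_cases hcase2 : ∃ u ∈ childIn P U v, W / 2 < ∑ x ∈ descIn P U u, f x
    · -- cut off a single branch
      obtain ⟨u, hu, huw⟩ := hcase2
      obtain ⟨huU, hupar, hunev⟩ := mem_childIn P |>.mp hu
      have hur : u ≠ r := child_ne_r P hA hP hupar hunev
      refine ⟨descIn P U u, descIn P U u, u, descIn_child_subset P hA hP hu, huw,
        Finset.Subset.refl _, Finset.subset_insert _ _, self_mem_descIn P hA hP huU,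
        Finset.filter_subset _ _, fun x hx hxu => branch_closed P hA hP hG hur hx hxu,
        Or.inr ?_, ?_, fun x hx => branch_walk P hA hP hG hx,
        branch_downclosed P hA hP⟩
      · rw [hupar]
        intro hvmem
        rw [mem_descIn] at hvmem
        exact child_not_mem P hA hP hupar hunev hvmem.2
      · have := hcase1 u hu
        linarith
    · -- group several branches at v
      push_neg at hcase2
      have hprefix := exists_prefix (childIn P U v) (fun u => ∑ x ∈ descIn P U u, f x) hW
        hcase2 (by rw [← hsum]; exact hwt)
      obtain ⟨J, hJC, hJlo, hJhi⟩ := hprefix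
      set R : Finset V := J.biUnion (fun u => descIn P U u) with hR
      have hwtR : ∑ x ∈ R, f x = ∑ u ∈ J, ∑ x ∈ descIn P U u, f x :=
        Finset.sum_biUnion ((childIn_pairwiseDisjoint P hA hP v).subset
          (by exact_mod_cast hJC))
      have hRsub : R ⊆ (descIn P U v).erase v := by
        intro x hx
        rw [hR, Finset.mem_biUnion] at hx
        obtain ⟨u, hu, hx⟩ := hx
        exact descIn_child_subset P hA hP (hJC hu) hx
      have hvR : v ∉ R := fun h => (Finset.mem_erase.mp (hRsub h)).1 rfl
      refine ⟨insert v R, R, v, hRsub, by rw [hwtR]; exact hJlo,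
        Finset.subset_insert _ _, Finset.Subset.refl _, Finset.mem_insert_self _ _, ?_,
        ?_, ?_, ?_, ?_, ?_⟩
      · -- insert v R ⊆ U
        intro x hx
        rcases Finset.mem_insert.mp hx with rfl | hx
        · exact hv
        · exact (mem_descIn P |>.mp (Finset.mem_of_mem_erase (hRsub hx))).1
      · -- closure property
        intro x hx hxv
        have hxR : x ∈ R := by
          rcases Finset.mem_insert.mp hx with rfl | h
          · exact absurd rfl hxv
          · exact h
        rw [hR, Finset.mem_biUnion] at hxR
        obtain ⟨u, huJ, hxd⟩ := hxR
        obtain ⟨huU, hupar, hunev⟩ := mem_childIn P |>.mp (hJC huJ)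
        have hur : u ≠ r := child_ne_r P hA hP hupar hunev
        by_cases hxu : x = u
        · subst hxu
          rw [hupar]
          exact ⟨Finset.mem_insert_self _ _, hur⟩
        · obtain ⟨hpar, hxr⟩ := branch_closed P hA hP hG hur hxd hxu
          refine ⟨Finset.mem_insert_of_mem ?_, hxr⟩
          rw [hR, Finset.mem_biUnion]
          exact ⟨u, huJ, hpar⟩
      · -- a = r ∨ par a ∉ A
        by_cases hvr : v = r
        · exact Or.inl hvr
        · refine Or.inr ?_
          intro hmem
          have hpadj : T.Adj v (par P v) := adj_par P hA hP hvr
          rcases Finset.mem_insert.mp hmem with h | h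
          · rw [h] at hpadj
            exact T.loopless.irrefl v hpadj
          · rw [hR, Finset.mem_biUnion] at h
            obtain ⟨u, huJ, hpd⟩ := h
            obtain ⟨huU, hupar, hunev⟩ := mem_childIn P |>.mp (hJC huJ)
            rw [mem_descIn] at hpd
            have huSv : u ∈ (P v).support := by
              rw [supP_par P hA hP hvr]
              exact List.mem_cons_of_mem _ hpd.2
            exact child_not_mem P hA hP hupar hunev huSv
      · -- weight bound
        rw [Finset.erase_insert hvR, hwtR]
        exact hJhi
      · -- walks to v
        intro x hx
        rcases Finset.mem_insert.mp hx with rfl | hxR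
        · exact ⟨Walk.nil, by simp⟩
        · rw [hR, Finset.mem_biUnion] at hxR
          obtain ⟨u, huJ, hxd⟩ := hxR
          obtain ⟨huU, hupar, hunev⟩ := mem_childIn P |>.mp (hJC huJ)
          have hur : u ≠ r := child_ne_r P hA hP hupar hunev
          have hadjuv : T.Adj u v := by
            have := adj_par P hA hP hur
            rwa [hupar] at this
          obtain ⟨q, hq⟩ := branch_walk P hA hP hG hxd
          refine ⟨q.append (Walk.cons hadjuv Walk.nil), fun y hy => ?_⟩
          rw [Walk.mem_support_append_iff] at hy
          rcases hy with hy | hy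
          · refine Finset.mem_insert_of_mem ?_
            rw [hR, Finset.mem_biUnion]
            exact ⟨u, huJ, hq y hy⟩
          · rw [Walk.support_cons, Walk.support_nil] at hy
            rcases List.mem_cons.mp hy with h | hy
            · refine Finset.mem_insert_of_mem ?_
              rw [hR, Finset.mem_biUnion]
              refine ⟨u, huJ, ?_⟩
              rw [h]
              exact self_mem_descIn P hA hP huU
            · rw [List.mem_singleton] at hy
              subst hy
              exact Finset.mem_insert_self _ _
      · -- down-closed
        intro x hxU y hyR hyS
        rw [hR, Finset.mem_biUnion] at hyR ⊢
        obtain ⟨u, huJ, hyd⟩ := hyR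
        exact ⟨u, huJ, branch_downclosed P hA hP x hxU y hyd hyS⟩
end Cut

section Main
variable {V : Type*} [DecidableEq V] {T : SimpleGraph V} {r : V}
variable (P : ∀ x : V, T.Walk x r) (hA : T.IsAcyclic) (hP : ∀ x, (P x).IsPath)
variable (w : V → V → ℝ) (hw : ∀ u v, 0 ≤ w u v) (hsymm : ∀ a b, w a b = w b a) {W : ℝ}

include hA hP hw hsymm in
lemma mainLemma (hW : 0 < W) : ∀ (n : ℕ) (U : Finset V), U.card ≤ n →
    GoodF (r := r) P U →
    ∃ 𝒜 : Finset (Finset V),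
      (∀ A ∈ 𝒜, A ⊆ U) ∧
      (∀ A ∈ 𝒜, ((⊤ : T.Subgraph).induce (↑A : Set V)).Connected) ∧
      (∀ A ∈ 𝒜, edgesWeight w hsymm ((⊤ : T.Subgraph).induce (↑A : Set V)).edgeSet ≤ W) ∧
      (∀ A ∈ 𝒜, ∀ B ∈ 𝒜, A ≠ B → (A ∩ B).card ≤ 1) ∧
      (∀ x ∈ U, ∃ A ∈ 𝒜, x ∈ A) ∧
      ((𝒜.card : ℝ) ≤ 2 * (∑ x ∈ U.erase r, w x (par P x)) / W + 1) := by
  intro n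
  induction n using Nat.strong_induction_on with
  | _ n ih =>
  intro U hcard hG
  have hrU : r ∈ U := hG.1
  have hnonneg : (0:ℝ) ≤ ∑ x ∈ U.erase r, w x (par P x) :=
    Finset.sum_nonneg (fun x _ => hw _ _)
  by_cases hle : ∑ x ∈ U.erase r, w x (par P x) ≤ W
  · -- single piece
    refine ⟨{U}, ?_, ?_, ?_, ?_, ?_, ?_⟩
    · intro A hAmem
      rw [Finset.mem_singleton] at hAmem
      subst hAmem; exact Finset.Subset.refl _
    · intro A hAmem
      rw [Finset.mem_singleton] at hAmem
      subst hAmem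
      exact induce_connected_of_walks hrU (fun x hx => ⟨P x, fun y hy => hG.2 x hx y hy⟩)
    · intro A hAmem
      rw [Finset.mem_singleton] at hAmem
      subst hAmem
      rw [induce_weight_eq P hA hP w hsymm ?h1 (Or.inl rfl)]
      · exact hle
      case h1 =>
        intro x hx hxr
        refine ⟨hG.2 x hx _ ?_, hxr⟩
        rw [supP_par P hA hP hxr]
        exact List.mem_cons_of_mem _ (Walk.start_mem_support _)
    · intro A hAmem B hBmem hne
      rw [Finset.mem_singleton] at hAmem hBmem
      exact absurd (hAmem.trans hBmem.symm) hne
    · exact fun x hx => ⟨U, Finset.mem_singleton_self _, hx⟩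
    · rw [Finset.card_singleton]
      have : (0:ℝ) ≤ 2 * (∑ x ∈ U.erase r, w x (par P x)) / W :=
        div_nonneg (by linarith) hW.le
      push_cast
      linarith
  · push_neg at hle
    -- cut a piece
    have hUr : descIn P U r = U := by
      ext x
      rw [mem_descIn]
      exact ⟨fun h => h.1, fun h => ⟨h, Walk.end_mem_support _⟩⟩
    obtain ⟨A, R, a, c1, c2, c3, c4, c5, c6, c7, c8, c9, c10, c11⟩ :=
      cutLemma P hA hP w hw hW (descIn P U r).card U r le_rfl hG hrU
        (by rw [hUr]; linarith)
    rw [hUr] at c1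
    have hrR : r ∉ R := fun h => (Finset.mem_erase.mp (c1 h)).1 rfl
    have hRU : R ⊆ U := c1.trans (Finset.erase_subset _ _)
    have hRne : R.Nonempty := by
      rcases Finset.eq_empty_or_nonempty R with h | h
      · exfalso
        rw [h, Finset.sum_empty] at c2
        linarith
      · exact h
    set U' := U \ R with hU'
    have hG' : GoodF (r := r) P U' := by
      constructor
      · rw [hU', Finset.mem_sdiff]; exact ⟨hrU, hrR⟩
      · intro x hx y hy
        rw [hU', Finset.mem_sdiff] at hx ⊢
        refine ⟨hG.2 x hx.1 y hy, fun hyR => hx.2 (c11 x hx.1 y hyR hy)⟩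
    have hcard' : U'.card < U.card := Finset.card_lt_card (Finset.sdiff_ssubset hRU hRne)
    have hn1 : 1 ≤ n := by
      have : 1 ≤ U.card := Finset.card_pos.mpr ⟨r, hrU⟩
      omega
    obtain ⟨𝒜', d0, d1, d2, d3, d4, d5⟩ := ih (n - 1) (by omega) U' (by omega) hG'
    refine ⟨insert A 𝒜', ?_, ?_, ?_, ?_, ?_, ?_⟩
    · intro B hB
      rcases Finset.mem_insert.mp hB with rfl | hB
      · exact c6
      · exact (d0 B hB).trans (Finset.sdiff_subset)
    · intro B hB
      rcases Finset.mem_insert.mp hB with rfl | hB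
      · exact induce_connected_of_walks c5 c10
      · exact d1 B hB
    · intro B hB
      rcases Finset.mem_insert.mp hB with rfl | hB
      · rw [induce_weight_eq P hA hP w hsymm c7 c8]
        exact c9
      · exact d2 B hB
    · -- pairwise small intersections
      have key : ∀ B ∈ 𝒜', (A ∩ B).card ≤ 1 := by
        intro B hB
        have hsub : A ∩ B ⊆ {a} := by
          intro x hx
          rw [Finset.mem_inter] at hx
          have hxA := c4 hx.1
          have hxB := d0 B hB hx.2
          rw [hU', Finset.mem_sdiff] at hxB
          rcases Finset.mem_insert.mp hxA with rfl | hxR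
          · exact Finset.mem_singleton_self _
          · exact absurd hxR hxB.2
        calc (A ∩ B).card ≤ ({a} : Finset V).card := Finset.card_le_card hsub
          _ = 1 := Finset.card_singleton _
      intro B hB B' hB' hne
      rcases Finset.mem_insert.mp hB with h | h
      · rcases Finset.mem_insert.mp hB' with h' | h'
        · exact absurd (h.trans h'.symm) hne
        · rw [h]; exact key B' h'
      · rcases Finset.mem_insert.mp hB' with h' | h'
        · rw [h', Finset.inter_comm]; exact key B h
        · exact d3 B h B' h' hne
    · intro x hx
      by_cases hxR : x ∈ R
      · exact ⟨A, Finset.mem_insert_self _ _, c3 hxR⟩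
      · obtain ⟨B, hB, hxB⟩ := d4 x (by rw [hU', Finset.mem_sdiff]; exact ⟨hx, hxR⟩)
        exact ⟨B, Finset.mem_insert_of_mem hB, hxB⟩
    · -- cardinality bound
      have hUe : U'.erase r = (U.erase r) \ R := by
        ext x
        rw [Finset.mem_erase, hU', Finset.mem_sdiff, Finset.mem_sdiff, Finset.mem_erase]
        tauto
      have hsplit : ∑ x ∈ (U.erase r) \ R, w x (par P x) + ∑ x ∈ R, w x (par P x)
          = ∑ x ∈ U.erase r, w x (par P x) := Finset.sum_sdiff c1
      have hcardle : ((insert A 𝒜').card : ℝ) ≤ (𝒜'.card : ℝ) + 1 := by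
        have := Finset.card_insert_le A 𝒜'
        push_cast
        exact_mod_cast this
      have h1le : 1 ≤ 2 * (∑ x ∈ R, w x (par P x)) / W := by
        rw [le_div_iff₀ hW]
        linarith
      have heq : 2 * (∑ x ∈ U.erase r, w x (par P x)) / W
          = 2 * (∑ x ∈ U'.erase r, w x (par P x)) / W
            + 2 * (∑ x ∈ R, w x (par P x)) / W := by
        rw [hUe, ← hsplit]
        ring
      rw [hUe] at heq
      rw [hUe] at d5
      linarith
end Main

/-- Every weighted tree `T` can be covered by at most `2·(w(T)/W + 1)`
pairwise edge-disjoint subtrees ('micro-trees'), each of weight at most `W`, whose union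
contains every vertex of `T`. -/
theorem stmt_8 {V : Type*} [Fintype V] (T : SimpleGraph V) (hT : T.IsTree)
    (w : V → V → ℝ) (hw : ∀ u v, 0 ≤ w u v) (hsymm : ∀ u v, w u v = w v u)
    (W : ℝ) (hW : 0 < W) :
    ∃ 𝒯 : Finset T.Subgraph,
      (∀ S ∈ 𝒯, S.Connected) ∧
      (∀ S ∈ 𝒯, ∀ S' ∈ 𝒯, S ≠ S' → S.edgeSet ∩ S'.edgeSet = ∅) ∧
      (∀ S ∈ 𝒯, edgesWeight w hsymm S.edgeSet ≤ W) ∧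
      (∀ v : V, ∃ S ∈ 𝒯, v ∈ S.verts) ∧
      (𝒯.card : ℝ) ≤ 2 * (edgesWeight w hsymm T.edgeSet / W + 1) := by
  classical
  rcases isEmpty_or_nonempty V with hemp | hne
  · refine ⟨∅, by simp, by simp, by simp, fun v => (IsEmpty.false v).elim, ?_⟩
    have hE : T.edgeSet = ∅ := by
      ext e
      refine Sym2.ind (fun x y => ?_) e
      exact (IsEmpty.false x).elim
    rw [hE]
    unfold edgesWeight
    rw [finsum_mem_empty]
    simp only [Finset.card_empty, Nat.cast_zero, zero_div, zero_add, mul_one]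
    norm_num
  · have hconn := hT.isConnected.preconnected
    set r : V := Classical.arbitrary V with hr
    have hex : ∀ x : V, ∃ p : T.Walk x r, p.IsPath := by
      intro x
      obtain ⟨q⟩ := hconn x r
      exact ⟨q.toPath.1, q.toPath.2⟩
    choose P hP using hex
    have hA : T.IsAcyclic := hT.IsAcyclic
    have hGuniv : GoodF (r := r) P Finset.univ :=
      ⟨Finset.mem_univ _, fun _ _ _ _ => Finset.mem_univ _⟩
    obtain ⟨𝒜, e0, e1, e2, e3, e4, e5⟩ :=
      mainLemma P hA hP w hw hsymm hW (Finset.univ : Finset V).card Finset.univ le_rfl hGuniv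
    have hTE : T.edgeSet
        = ((⊤ : T.Subgraph).induce (↑(Finset.univ : Finset V) : Set V)).edgeSet := by
      ext e
      refine Sym2.ind (fun x y => ?_) e
      simp [Subgraph.mem_edgeSet, Subgraph.induce_adj]
    have hTW : edgesWeight w hsymm T.edgeSet
        = ∑ x ∈ (Finset.univ : Finset V).erase r, w x (par P x) := by
      rw [hTE]
      refine induce_weight_eq P hA hP w hsymm ?_ (Or.inl rfl)
      intro x _ hxr
      exact ⟨Finset.mem_univ _, hxr⟩
    set SG : Finset V → T.Subgraph := fun A => (⊤ : T.Subgraph).induce (↑A : Set V) with hSG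
    refine ⟨𝒜.image SG, ?_, ?_, ?_, ?_, ?_⟩
    · intro S hS
      obtain ⟨A, hA1, rfl⟩ := Finset.mem_image.mp hS
      exact e1 A hA1
    · intro S hS S' hS' hne'
      obtain ⟨A, hA1, rfl⟩ := Finset.mem_image.mp hS
      obtain ⟨B, hB1, rfl⟩ := Finset.mem_image.mp hS'
      have hAB : A ≠ B := fun h => hne' (by rw [h])
      have hcard1 := e3 A hA1 B hB1 hAB
      rw [Set.eq_empty_iff_forall_notMem]
      intro e he
      rw [Set.mem_inter_iff] at he
      obtain ⟨h1, h2⟩ := he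
      revert h1 h2
      refine Sym2.ind (fun x y h1 h2 => ?_) e
      rw [Subgraph.mem_edgeSet, Subgraph.induce_adj] at h1 h2
      obtain ⟨hxA, hyA, hadj⟩ := h1
      obtain ⟨hxB, hyB, _⟩ := h2
      rw [Subgraph.top_adj] at hadj
      have hxy : x ≠ y := hadj.ne
      have hsub : ({x, y} : Finset V) ⊆ A ∩ B := by
        intro z hz
        rcases Finset.mem_insert.mp hz with rfl | hz
        · exact Finset.mem_inter.mpr ⟨hxA, hxB⟩
        · rw [Finset.mem_singleton] at hz
          subst hz
          exact Finset.mem_inter.mpr ⟨hyA, hyB⟩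
      have h2le : 2 ≤ (A ∩ B).card := by
        calc 2 = ({x, y} : Finset V).card := (Finset.card_pair hxy).symm
          _ ≤ (A ∩ B).card := Finset.card_le_card hsub
      omega
    · intro S hS
      obtain ⟨A, hA1, rfl⟩ := Finset.mem_image.mp hS
      exact e2 A hA1
    · intro v
      obtain ⟨A, hA1, hv⟩ := e4 v (Finset.mem_univ v)
      refine ⟨SG A, Finset.mem_image_of_mem _ hA1, ?_⟩
      simp only [hSG, Subgraph.induce_verts, Finset.mem_coe]
      exact hv
    · have himage : (((𝒜.image SG)).card : ℝ)
          ≤ (𝒜.card : ℝ) := by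
        exact_mod_cast Finset.card_image_le
      rw [hTW]
      have harith : 2 * (∑ x ∈ (Finset.univ : Finset V).erase r, w x (par P x)) / W + 1
          ≤ 2 * ((∑ x ∈ (Finset.univ : Finset V).erase r, w x (par P x)) / W + 1) := by
        have : 2 * (∑ x ∈ (Finset.univ : Finset V).erase r, w x (par P x)) / W
            = 2 * ((∑ x ∈ (Finset.univ : Finset V).erase r, w x (par P x)) / W) := by ring
        linarith [this]
      linarith
end

section
/- Let T be a tree with non-negative real edge weights, let w(T) denote its total edge weight, let d_T denote the (weighted) tree distance, and let c_s, c_t be two (not necessarily distinct) vertices of T. Then there exists a walk in T from c_s to c_t that visits every vertex of T and whose length is exactly 2·w(T) − d_T(c_s, c_t). -/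
open SimpleGraph ENNReal

section proof_helpers
section helpers
variable {V : Type*}

@[simp] lemma walkWeight_nil {G : SimpleGraph V} (w : V → V → ℝ) {u : V} :
    walkWeight w (Walk.nil : G.Walk u u) = 0 := rfl

lemma walkWeight_cons {G : SimpleGraph V} (w : V → V → ℝ) {u v x : V}
    (h : G.Adj u v) (p : G.Walk v x) :
    walkWeight w (Walk.cons h p) = w u v + walkWeight w p := by
  simp [walkWeight]

lemma walkWeight_append {G : SimpleGraph V} (w : V → V → ℝ) {u v x : V}
    (p : G.Walk u v) (p' : G.Walk v x) :
    walkWeight w (p.append p') = walkWeight w p + walkWeight w p' := by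
  simp [walkWeight, Walk.darts_append]

lemma walkWeight_map {W : Type*} {G : SimpleGraph V} {G' : SimpleGraph W}
    (f : G →g G') (w : W → W → ℝ) {u v : V} (p : G.Walk u v) :
    walkWeight w (p.map f) = walkWeight (fun a b => w (f a) (f b)) p := by
  simp only [walkWeight, Walk.darts_map, List.map_map]
  rfl

lemma reachable_induce {G : SimpleGraph V} {s : Set V} {a b : V} (p : G.Walk a b)
    (hsup : ∀ x ∈ p.support, x ∈ s) (ha : a ∈ s) (hb : b ∈ s) :
    (G.induce s).Reachable ⟨a, ha⟩ ⟨b, hb⟩ := by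
  induction p with
  | nil => rfl
  | @cons u v c h p ih =>
    have hv : v ∈ s := hsup v (by simp)
    have hadj : (G.induce s).Adj ⟨u, ha⟩ ⟨v, hv⟩ := by simpa using h
    exact hadj.reachable.trans (ih (fun x hx => hsup x (by simp [hx])) hv hb)

lemma leaf_not_interior {G : SimpleGraph V} {ℓ : V}
    (huniq : ∀ x y, G.Adj ℓ x → G.Adj ℓ y → x = y) {a b : V} (p : G.Walk a b)
    (hp : p.IsPath) (ha : a ≠ ℓ) (hb : b ≠ ℓ) : ℓ ∉ p.support := by
  induction p with
  | nil => simpa using fun h => ha h.symm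
  | @cons u v c h p ih =>
    intro hmem
    rw [Walk.support_cons, List.mem_cons] at hmem
    rcases hmem with rfl | hmem
    · exact ha rfl
    by_cases hv : v = ℓ
    · subst hv
      cases p with
      | nil => exact hb rfl
      | @cons _ d _ h' p' =>
        have : u = d := huniq u d h.symm h'
        subst this
        have h2 := hp.2
        simp at h2
    · exact ih hp.of_cons hv hb hmem

end helpers
section helpers2
variable {V : Type*}

lemma exists_two_leaves [Fintype V] {G : SimpleGraph V} (hG : G.IsTree)
    (h2 : 2 ≤ Fintype.card V) :
    ∃ a b : V, a ≠ b ∧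
      ((∃ x, G.Adj a x) ∧ ∀ x y, G.Adj a x → G.Adj a y → x = y) ∧
      ((∃ x, G.Adj b x) ∧ ∀ x y, G.Adj b x → G.Adj b y → x = y) := by
  classical
  have hdegpos : ∀ v : V, 0 < G.degree v := by
    intro v
    rw [G.degree_pos_iff_exists_adj]
    obtain ⟨u, hu⟩ := Fintype.exists_ne_of_one_lt_card (by omega) v
    obtain ⟨p⟩ := hG.isConnected.preconnected v u
    cases p with
    | nil => exact absurd rfl hu
    | cons h _ => exact ⟨_, h⟩
  have hsum : ∑ v : V, G.degree v = 2 * G.edgeFinset.card :=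
    G.sum_degrees_eq_twice_card_edges
  have hcardE : G.edgeFinset.card + 1 = Fintype.card V := hG.card_edgeFinset
  set S : Finset V := Finset.univ.filter (fun v => G.degree v = 1) with hS
  have hle : ∑ v : V, (if G.degree v = 1 then 1 else 2) ≤ ∑ v : V, G.degree v := by
    refine Finset.sum_le_sum fun v _ => ?_
    by_cases hv : G.degree v = 1
    · simp [hv]
    · simp only [hv, if_false]
      have := hdegpos v; omega
  have hsplit : ∑ v : V, (if G.degree v = 1 then 1 else 2)
      = S.card * 1 + (Finset.univ.filter (fun v => ¬ G.degree v = 1)).card * 2 := by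
    rw [Finset.sum_ite, Finset.sum_const, Finset.sum_const, hS]
    simp [mul_comm]
  have hpart : S.card + (Finset.univ.filter (fun v => ¬ G.degree v = 1)).card
      = Fintype.card V := by
    rw [hS]
    simpa using Finset.card_filter_add_card_filter_not
      (s := (Finset.univ : Finset V)) (p := fun v => G.degree v = 1)
  have hScard : 2 ≤ S.card := by omega
  obtain ⟨a, ha, b, hb, hab⟩ := Finset.one_lt_card.mp (by omega : 1 < S.card)
  have hdeg : ∀ {c : V}, c ∈ S → ((∃ x, G.Adj c x) ∧ ∀ x y, G.Adj c x → G.Adj c y → x = y) := by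
    intro c hc
    have hc1 : G.degree c = 1 := by simpa [hS] using hc
    obtain ⟨u, hu⟩ := Finset.card_eq_one.mp hc1
    have hmem : ∀ x, G.Adj c x ↔ x ∈ G.neighborFinset c := by
      intro x; simp [SimpleGraph.mem_neighborFinset]
    refine ⟨⟨u, ?_⟩, ?_⟩
    · rw [hmem]; simp [hu]
    · intro x y hx hy
      rw [hmem, hu] at hx hy
      simp only [Finset.mem_singleton] at hx hy
      exact hx.trans hy.symm
  exact ⟨a, b, hab, hdeg ha, hdeg hb⟩

end helpers2
variable {V : Type*}
lemma isTree_induce_of_leaf [Fintype V] {T : SimpleGraph V} (hT : T.IsTree) {ℓ : V}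
    (huniq : ∀ x y, T.Adj ℓ x → T.Adj ℓ y → x = y) (h2 : 2 ≤ Fintype.card V) :
    (T.induce {v | v ≠ ℓ}).IsTree := by
  classical
  constructor
  · rw [connected_iff]
    constructor
    · rintro ⟨a, ha⟩ ⟨b, hb⟩
      obtain ⟨r⟩ := hT.isConnected.preconnected a b
      have hpath := r.toPath.2
      have hni : ℓ ∉ r.toPath.1.support := leaf_not_interior huniq _ hpath ha hb
      exact reachable_induce r.toPath.1
        (fun x hx => fun hxe => hni (by rwa [hxe] at hx)) ha hb
    · obtain ⟨u, hu⟩ := Fintype.exists_ne_of_one_lt_card (by omega) ℓ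
      exact ⟨⟨u, hu⟩⟩
  · intro v c hc
    have hinj : Function.Injective (SimpleGraph.Embedding.induce {v : V | v ≠ ℓ} (G := T)).toHom := by
      intro x y h
      exact Subtype.val_injective h
    exact hT.IsAcyclic _ (hc.map hinj)

lemma edgesWeight_eq_sum [Fintype V] (w : V → V → ℝ) (hs : ∀ a b, w a b = w b a)
    (E : Set (Sym2 V)) :
    edgesWeight w hs E = ∑ e ∈ E.toFinite.toFinset, Sym2.lift ⟨w, hs⟩ e := by
  rw [edgesWeight, ← finsum_mem_coe_finset, Set.Finite.coe_toFinset]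

lemma edgesWeight_delete [Fintype V] (T : SimpleGraph V) (w : V → V → ℝ)
    (hs : ∀ a b, w a b = w b a) {ℓ u : V}
    (huniq : ∀ x y, T.Adj ℓ x → T.Adj ℓ y → x = y) (hu : T.Adj ℓ u) :
    edgesWeight w hs T.edgeSet
      = edgesWeight (fun a b : {v : V // v ≠ ℓ} => w a b) (fun a b => hs a b)
          (T.induce {v | v ≠ ℓ}).edgeSet + w ℓ u := by
  classical
  rw [edgesWeight_eq_sum, edgesWeight_eq_sum]
  set f : Sym2 V → ℝ := Sym2.lift ⟨w, hs⟩ with hf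
  set A := T.edgeSet.toFinite.toFinset with hA
  set B := (T.induce {v : V | v ≠ ℓ}).edgeSet.toFinite.toFinset with hB
  have hsplit := Finset.sum_filter_add_sum_filter_not A (fun e => ℓ ∈ e) f
  have h1 : A.filter (fun e => ℓ ∈ e) = {s(ℓ, u)} := by
    ext e
    induction e using Sym2.ind with
    | _ a b =>
      simp only [Finset.mem_filter, hA, Set.Finite.mem_toFinset, SimpleGraph.mem_edgeSet,
        Finset.mem_singleton, Sym2.mem_iff]
      constructor
      · rintro ⟨hadj, rfl | rfl⟩
        · have : b = u := huniq b u hadj hu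
          rw [this]
        · have : a = u := huniq a u hadj.symm hu
          rw [this, Sym2.eq_swap]
      · intro he
        rw [Sym2.eq_iff] at he
        rcases he with ⟨rfl, rfl⟩ | ⟨rfl, rfl⟩
        · exact ⟨hu, Or.inl rfl⟩
        · exact ⟨hu.symm, Or.inr rfl⟩
  have h2 : A.filter (fun e => ℓ ∉ e) = B.image (Sym2.map Subtype.val) := by
    ext e
    constructor
    · intro he
      induction e using Sym2.ind with
      | _ a b =>
        simp only [Finset.mem_filter, hA, Set.Finite.mem_toFinset,
          SimpleGraph.mem_edgeSet, Sym2.mem_iff] at he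
        obtain ⟨hadj, hne⟩ := he
        push_neg at hne
        refine Finset.mem_image.mpr ⟨s(⟨a, fun h => hne.1 h.symm⟩, ⟨b, fun h => hne.2 h.symm⟩), ?_, ?_⟩
        · simp only [hB, Set.Finite.mem_toFinset, SimpleGraph.mem_edgeSet]
          simpa using hadj
        · simp [Sym2.map_pair_eq]
    · intro he
      obtain ⟨e', he', rfl⟩ := Finset.mem_image.mp he
      induction e' using Sym2.ind with
      | _ a b =>
        simp only [hB, Set.Finite.mem_toFinset, SimpleGraph.mem_edgeSet] at he'
        have hadj : T.Adj a.1 b.1 := by simpa using he'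
        simp only [Sym2.map_pair_eq, Finset.mem_filter, hA, Set.Finite.mem_toFinset,
          SimpleGraph.mem_edgeSet, Sym2.mem_iff]
        refine ⟨hadj, ?_⟩
        push_neg
        exact ⟨fun h => a.2 h.symm, fun h => b.2 h.symm⟩
  have h3 : ∑ e ∈ B.image (Sym2.map Subtype.val), f e
      = ∑ e ∈ B, Sym2.lift ⟨fun a b : {v : V // v ≠ ℓ} => w a b, fun a b => hs a b⟩ e := by
    rw [Finset.sum_image (fun x _ y _ h => Sym2.map.injective Subtype.val_injective h)]
    refine Finset.sum_congr rfl fun e _ => ?_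
    induction e using Sym2.ind with
    | _ a b => simp [hf, Sym2.map_pair_eq]
  rw [← hsplit, h1, h2, h3, Finset.sum_singleton]
  have : f s(ℓ, u) = w ℓ u := by simp [hf]
  rw [this]
  exact add_comm _ _

end proof_helpers

universe u

theorem tour_aux (n : ℕ) : ∀ {V : Type u} [Fintype V] (T : SimpleGraph V) (_hT : T.IsTree)
    (w : V → V → ℝ) (_hw : ∀ u v, 0 ≤ w u v) (hsymm : ∀ u v, w u v = w v u)
    (cs ct : V) (q : T.Walk cs ct) (_hq : q.IsPath), Fintype.card V ≤ n →
    ∃ p : T.Walk cs ct, (∀ v : V, v ∈ p.support) ∧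
      walkWeight w p = 2 * edgesWeight w hsymm T.edgeSet - walkWeight w q := by
  induction n with
  | zero =>
    intro V _ T hT w hw hsymm cs ct q hq hcard
    exact absurd hcard (by have := Fintype.card_pos_iff.mpr ⟨cs⟩; omega)
  | succ n ih =>
    intro V _ T hT w hw hsymm cs ct q hq hcard
    classical
    by_cases hn : Fintype.card V ≤ 1
    · -- base case: single vertex
      have hsub : Subsingleton V := Fintype.card_le_one_iff_subsingleton.mp hn
      cases q with
      | cons h p => exact absurd (Subsingleton.elim _ _) h.ne
      | nil =>
        refine ⟨Walk.nil, fun v => by simp [Subsingleton.elim v cs], ?_⟩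
        have hE : T.edgeSet = ∅ := by
          ext e
          induction e using Sym2.ind with
          | _ a b =>
            simp only [SimpleGraph.mem_edgeSet, Set.mem_empty_iff_false, iff_false]
            exact fun h => h.ne (Subsingleton.elim a b)
        simp [walkWeight, edgesWeight, hE, finsum_mem_empty]
    · have h2 : 2 ≤ Fintype.card V := by omega
      -- Case A as a general statement:
      have caseA : ∀ ℓ : V, (∃ x, T.Adj ℓ x) → (∀ x y, T.Adj ℓ x → T.Adj ℓ y → x = y) →
          ℓ ≠ cs → ℓ ≠ ct →
          ∃ p : T.Walk cs ct, (∀ v : V, v ∈ p.support) ∧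
            walkWeight w p = 2 * edgesWeight w hsymm T.edgeSet - walkWeight w q := by
        rintro ℓ ⟨u, hu⟩ huniq hlcs hlct
        set s : Set V := {v | v ≠ ℓ} with hs_def
        have hTs : (T.induce s).IsTree := isTree_induce_of_leaf hT huniq h2
        have hcs : cs ∈ s := fun h => hlcs h.symm
        have hct : ct ∈ s := fun h => hlct h.symm
        have hcards : Fintype.card ↥s ≤ n := by
          have : Fintype.card ↥s < Fintype.card V :=
            Fintype.card_subtype_lt (x := ℓ) (by simp [hs_def])
          omega
        obtain ⟨r⟩ := hTs.isConnected.preconnected ⟨cs, hcs⟩ ⟨ct, hct⟩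
        set q' : (T.induce s).Walk ⟨cs, hcs⟩ ⟨ct, hct⟩ := r.toPath.1 with hq'_def
        have hq'path : q'.IsPath := r.toPath.2
        set emb : T.induce s ↪g T := SimpleGraph.Embedding.induce s with hemb
        have hinj : Function.Injective emb.toHom := fun x y h => Subtype.val_injective h
        have Q : T.Walk cs ct := q'.map emb.toHom
        have hQpath : (q'.map emb.toHom).IsPath := q'.map_isPath_of_injective hinj hq'path
        have hqQ : q = q'.map emb.toHom := by
          have := hT.IsAcyclic.path_unique ⟨q, hq⟩ ⟨q'.map emb.toHom, hQpath⟩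
          exact congrArg Subtype.val this
        obtain ⟨p', hp'cov, hp'w⟩ := ih (T.induce s) hTs (fun a b => w a b)
          (fun a b => hw a b) (fun a b => hsymm a b) ⟨cs, hcs⟩ ⟨ct, hct⟩ q' hq'path hcards
        set P : T.Walk cs ct := p'.map emb.toHom with hP
        have hune : u ≠ ℓ := fun h => (T.irrefl (h ▸ hu : T.Adj ℓ ℓ))
        have huP : u ∈ P.support := by
          have := hp'cov ⟨u, hune⟩
          erw [hP, Walk.support_map]
          exact List.mem_map.mpr ⟨⟨u, hune⟩, this, rfl⟩
        refine ⟨(P.takeUntil u huP).append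
          (Walk.cons hu.symm (Walk.cons hu (P.dropUntil u huP))), ?_, ?_⟩
        · intro v
          rw [Walk.mem_support_append_iff]
          by_cases hv : v = ℓ
          · right; subst hv; simp
          · have hvP : v ∈ P.support := by
              erw [hP, Walk.support_map]
              exact List.mem_map.mpr ⟨⟨v, hv⟩, hp'cov ⟨v, hv⟩, rfl⟩
            rw [← Walk.take_spec P huP, Walk.mem_support_append_iff] at hvP
            rcases hvP with h | h
            · exact Or.inl h
            · right; simp [Walk.support_cons]; tauto
        · rw [walkWeight_append, walkWeight_cons, walkWeight_cons]
          have hPsplit : walkWeight w (P.takeUntil u huP) + walkWeight w (P.dropUntil u huP)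
              = walkWeight w P := by
            rw [← walkWeight_append, Walk.take_spec]
          have hPw : walkWeight w P = walkWeight (fun a b : ↥s => w a b) p' := by
            erw [hP, walkWeight_map]
            rfl
          have hqw : walkWeight w q = walkWeight (fun a b : ↥s => w a b) q' := by
            erw [hqQ, walkWeight_map]
            rfl
          have hE : edgesWeight w hsymm T.edgeSet
              = edgesWeight (fun a b : ↥s => w a b) (fun a b => hsymm a b)
                ((T.induce s).edgeSet) + w ℓ u :=
            edgesWeight_delete T w hsymm huniq hu
          rw [hqw, hE]
          have h1 : w u ℓ = w ℓ u := hsymm u ℓ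
          linarith [hp'w]
      obtain ⟨l₁, l₂, hne, hl₁, hl₂⟩ := exists_two_leaves hT h2
      by_cases hA1 : l₁ ≠ cs ∧ l₁ ≠ ct
      · exact caseA l₁ hl₁.1 hl₁.2 hA1.1 hA1.2
      by_cases hA2 : l₂ ≠ cs ∧ l₂ ≠ ct
      · exact caseA l₂ hl₂.1 hl₂.2 hA2.1 hA2.2
      -- Case B : cs is a leaf and cs ≠ ct
      push_neg at hA1 hA2
      have hcsleaf : (∀ x y, T.Adj cs x → T.Adj cs y → x = y) ∧ cs ≠ ct := by
        by_cases h1 : l₁ = cs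
        · subst h1
          have h2' : l₂ = ct := hA2 (fun hh => hne hh.symm)
          exact ⟨hl₁.2, by rw [← h2']; exact hne⟩
        · have h1' : l₁ = ct := hA1 h1
          have h2' : l₂ = cs := by
            by_contra hh
            exact hne (h1'.trans ((hA2 hh).symm))
          subst h2'
          exact ⟨hl₂.2, fun hh => h1 (h1'.trans hh.symm)⟩
      obtain ⟨huniq, hcsct⟩ := hcsleaf
      cases q with
      | nil => exact absurd rfl hcsct
      | @cons _ c1 _ h qtl =>
        set s : Set V := {v | v ≠ cs} with hs_def
        have hTs : (T.induce s).IsTree := isTree_induce_of_leaf hT huniq h2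
        have hc1 : c1 ∈ s := fun he => (T.irrefl (he ▸ h : T.Adj cs cs))
        have hct : ct ∈ s := fun he => hcsct he.symm
        have hcards : Fintype.card ↥s ≤ n := by
          have : Fintype.card ↥s < Fintype.card V :=
            Fintype.card_subtype_lt (x := cs) (by simp [hs_def])
          omega
        obtain ⟨r⟩ := hTs.isConnected.preconnected ⟨c1, hc1⟩ ⟨ct, hct⟩
        set q' : (T.induce s).Walk ⟨c1, hc1⟩ ⟨ct, hct⟩ := r.toPath.1 with hq'_def
        have hq'path : q'.IsPath := r.toPath.2
        set emb : T.induce s ↪g T := SimpleGraph.Embedding.induce s with hemb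
        have hinj : Function.Injective emb.toHom := fun x y hxy => Subtype.val_injective hxy
        have hQpath : (q'.map emb.toHom).IsPath := q'.map_isPath_of_injective hinj hq'path
        have hQcons : (Walk.cons h (q'.map emb.toHom)).IsPath := by
          refine hQpath.cons ?_
          rw [Walk.support_map]
          rintro hmem
          obtain ⟨⟨x, hx⟩, _, hxe⟩ := List.mem_map.mp hmem
          exact hx hxe
        have hqQ : Walk.cons h qtl = Walk.cons h (q'.map emb.toHom) := by
          have := hT.IsAcyclic.path_unique ⟨Walk.cons h qtl, hq⟩
            ⟨Walk.cons h (q'.map emb.toHom), hQcons⟩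
          exact congrArg Subtype.val this
        obtain ⟨p', hp'cov, hp'w⟩ := ih (T.induce s) hTs (fun a b => w a b)
          (fun a b => hw a b) (fun a b => hsymm a b) ⟨c1, hc1⟩ ⟨ct, hct⟩ q' hq'path hcards
        refine ⟨Walk.cons h (p'.map emb.toHom), ?_, ?_⟩
        · intro v
          erw [Walk.support_cons, List.mem_cons]
          by_cases hv : v = cs
          · exact Or.inl hv
          · right
            erw [Walk.support_map]
            exact List.mem_map.mpr ⟨⟨v, hv⟩, hp'cov ⟨v, hv⟩, rfl⟩
        · erw [hqQ, walkWeight_cons, walkWeight_cons, walkWeight_map, walkWeight_map]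
          have hco : (fun a b => w (emb.toHom a) (emb.toHom b)) = (fun a b : ↥s => w a b) := rfl
          rw [hco]
          have hE : edgesWeight w hsymm T.edgeSet
              = edgesWeight (fun a b : ↥s => w a b) (fun a b => hsymm a b)
                ((T.induce s).edgeSet) + w cs c1 :=
            edgesWeight_delete T w hsymm huniq h
          rw [hE]
          linarith [hp'w]


/-- In a weighted tree `T` there is a walk from `c_s` to `c_t` visiting
every vertex whose length is exactly `2·w(T) − d_T(c_s, c_t)` (the latter being the length
of the unique simple path `q` between `c_s` and `c_t`). -/
theorem stmt_9 {V : Type*} [Fintype V] (T : SimpleGraph V) (hT : T.IsTree)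
    (w : V → V → ℝ) (hw : ∀ u v, 0 ≤ w u v) (hsymm : ∀ u v, w u v = w v u)
    (cs ct : V) (q : T.Walk cs ct) (hq : q.IsPath) :
    ∃ p : T.Walk cs ct, (∀ v : V, v ∈ p.support) ∧
      walkWeight w p = 2 * edgesWeight w hsymm T.edgeSet - walkWeight w q :=
  tour_aux (Fintype.card V) T hT w hw hsymm cs ct q hq (le_refl _)
end

section
/- For every source vertex s ∈ V there exists a spanning subgraph H of G with at most 2^k·n edges such that σ_H(s,t) = σ_G(s,t) for every vertex t ∈ V, i.e., a single-source group Steiner preserver with source s and size at most 2^k·n. -/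
open SimpleGraph ENNReal

namespace Stmt14

variable {V : Type*} {G : SimpleGraph V}

/-- Covering a sub-collection of the groups. -/
def Covers {k : ℕ} (R : Fin k → Set V) (S : Finset (Fin k)) {u v : V} (p : G.Walk u v) : Prop :=
  ∀ i ∈ S, ∃ x ∈ R i, x ∈ p.support

lemma walkWeight_nonneg {w : V → V → ℝ} (hw : ∀ u v, 0 ≤ w u v) {u v : V} (p : G.Walk u v) :
    0 ≤ walkWeight w p := by
  apply List.sum_nonneg
  intro x hx
  simp only [List.mem_map] at hx
  obtain ⟨d, -, rfl⟩ := hx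
  exact hw _ _

lemma walkWeight_concat (w : V → V → ℝ) {u v x : V} (p : G.Walk u v) (h : G.Adj v x) :
    walkWeight w (p.concat h) = walkWeight w p + w v x := by
  simp [walkWeight, Walk.darts_concat]

lemma walkWeight_mapLe {G' : SimpleGraph V} (hle : G ≤ G') (w : V → V → ℝ) {u v : V}
    (p : G.Walk u v) : walkWeight w (p.mapLe hle) = walkWeight w p := by
  induction p with
  | nil => rfl
  | cons h p ih =>
    simp only [Walk.mapLe, Walk.map_cons, walkWeight, Walk.darts_cons, List.map_cons,
      List.sum_cons] at *
    rw [ih]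
    rfl

lemma support_mapLe {G' : SimpleGraph V} (hle : G ≤ G') {u v : V} (p : G.Walk u v) :
    (p.mapLe hle).support = p.support := by
  induction p with
  | nil => rfl
  | cons h p ih =>
    simp only [Walk.mapLe, Walk.map_cons, Walk.support_cons] at ih ⊢
    rw [ih]

lemma exists_concat_of_not_nil {u v : V} (p : G.Walk u v) (hp : ¬ p.Nil) :
    ∃ (x : V) (q : G.Walk u x) (h : G.Adj x v), p = q.concat h := by
  cases p with
  | nil => simp at hp
  | cons h p => exact Walk.exists_cons_eq_concat h p

lemma exists_walk_through (hconn : G.Connected) :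
    ∀ (l : List V) (a b : V), ∃ p : G.Walk a b, ∀ x ∈ l, x ∈ p.support := by
  intro l
  induction l with
  | nil =>
    intro a b
    obtain ⟨p⟩ := hconn.preconnected a b
    exact ⟨p, by simp⟩
  | cons x xs ih =>
    intro a b
    obtain ⟨q, hq⟩ := ih x b
    obtain ⟨r⟩ := hconn.preconnected a x
    refine ⟨r.append q, ?_⟩
    intro y hy
    rw [Walk.mem_support_append_iff]
    rcases List.mem_cons.mp hy with rfl | hy
    · exact Or.inr q.start_mem_support
    · exact Or.inr (hq y hy)

lemma exists_covering_walk (hconn : G.Connected) {k : ℕ} (R : Fin k → Set V)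
    (hR : ∀ i, (R i).Nonempty) (S : Finset (Fin k)) (s t : V) :
    ∃ p : G.Walk s t, Covers R S p := by
  obtain ⟨p, hp⟩ := exists_walk_through hconn ((List.finRange k).map fun i => (hR i).choose) s t
  refine ⟨p, fun i _ => ⟨(hR i).choose, (hR i).choose_spec, hp _ ?_⟩⟩
  simp only [List.mem_map]
  exact ⟨i, List.mem_finRange i, rfl⟩

/-- Among all walks from `s` to `t` covering the groups in `S`, there is one of minimum
weight, and of minimum length among those of minimum weight. -/
lemma exists_opt [Fintype V] {w : V → V → ℝ} (hw : ∀ u v, 0 ≤ w u v) {k : ℕ}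
    (R : Fin k → Set V) (S : Finset (Fin k)) (s t : V)
    (hne : ∃ p : G.Walk s t, Covers R S p) :
    ∃ p : G.Walk s t, Covers R S p ∧
      (∀ q : G.Walk s t, Covers R S q → walkWeight w p ≤ walkWeight w q) ∧
      (∀ q : G.Walk s t, Covers R S q → walkWeight w q = walkWeight w p → p.length ≤ q.length) := by
  classical
  obtain ⟨p0, hp0⟩ := hne
  set M : ℝ := walkWeight w p0 with hM
  have hwsum : ∀ (q : G.Walk s t),
      walkWeight w q = ∑ d : G.Dart, (q.darts.count d : ℝ) * w d.toProd.1 d.toProd.2 := by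
    intro q
    rw [walkWeight, Finset.sum_list_map_count]
    rw [Finset.sum_subset (Finset.subset_univ q.darts.toFinset)]
    · simp [nsmul_eq_mul]
    · intro d _ hd
      simp only [List.mem_toFinset] at hd
      simp [List.count_eq_zero_of_not_mem hd]
  set F : (G.Dart → ℕ) → ℝ := fun c => ∑ d : G.Dart, (c d : ℝ) * w d.toProd.1 d.toProd.2 with hF
  have htrunc : ∀ (q : G.Walk s t),
      walkWeight w q = F (fun d => if w d.toProd.1 d.toProd.2 = 0 then 0 else q.darts.count d) := by
    intro q
    rw [hwsum q]
    apply Finset.sum_congr rfl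
    intro d _
    by_cases h : w d.toProd.1 d.toProd.2 = 0 <;> simp [h]
  set B : Set (G.Dart → ℕ) :=
    {c | ∀ d, (c d : ℝ) * w d.toProd.1 d.toProd.2 ≤ M ∧ (w d.toProd.1 d.toProd.2 = 0 → c d = 0)}
    with hB
  have hBfin : B.Finite := by
    have : B ⊆ Set.pi Set.univ
        (fun d : G.Dart => {m : ℕ | (m : ℝ) * w d.toProd.1 d.toProd.2 ≤ M ∧
          (w d.toProd.1 d.toProd.2 = 0 → m = 0)}) := by
      intro c hc d _
      exact hc d
    refine (Set.Finite.pi fun d => ?_).subset this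
    by_cases h : w d.toProd.1 d.toProd.2 = 0
    · apply Set.Finite.subset (Set.finite_singleton 0)
      intro m hm
      exact hm.2 h
    · have hpos : 0 < w d.toProd.1 d.toProd.2 := lt_of_le_of_ne (hw _ _) (Ne.symm h)
      apply Set.Finite.subset (Set.finite_Iic (⌈M / w d.toProd.1 d.toProd.2⌉₊))
      intro m hm
      have : (m : ℝ) ≤ M / w d.toProd.1 d.toProd.2 := by
        rw [le_div_iff₀ hpos]
        exact hm.1
      calc m = ⌈(m : ℝ)⌉₊ := by simp
        _ ≤ ⌈M / w d.toProd.1 d.toProd.2⌉₊ := Nat.ceil_le_ceil this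
  have hM0 : 0 ≤ M := walkWeight_nonneg hw p0
  have hterm : ∀ (c : G.Dart → ℕ) (d : G.Dart),
      (c d : ℝ) * w d.toProd.1 d.toProd.2 ≤ F c := by
    intro c d
    rw [hF]
    exact Finset.single_le_sum
      (f := fun d' : G.Dart => (c d' : ℝ) * w d'.toProd.1 d'.toProd.2)
      (fun d' _ => mul_nonneg (Nat.cast_nonneg _) (hw _ _)) (Finset.mem_univ d)
  set T : Set ℝ := {r | (∃ q : G.Walk s t, Covers R S q ∧ walkWeight w q = r) ∧ r ≤ M} with hT
  have hTfin : T.Finite := by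
    apply (hBfin.image F).subset
    rintro r ⟨⟨q, hq, rfl⟩, hle⟩
    refine ⟨fun d => if w d.toProd.1 d.toProd.2 = 0 then 0 else q.darts.count d,
      ?_, (htrunc q).symm⟩
    intro d
    constructor
    · calc ((if w d.toProd.1 d.toProd.2 = 0 then 0 else q.darts.count d : ℕ) : ℝ) *
            w d.toProd.1 d.toProd.2
          ≤ F (fun d => if w d.toProd.1 d.toProd.2 = 0 then 0 else q.darts.count d) :=
            hterm (fun d' => if w d'.toProd.1 d'.toProd.2 = 0 then 0 else q.darts.count d') d
        _ = walkWeight w q := (htrunc q).symm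
        _ ≤ M := hle
    · intro h; simp [h]
  have hTne : T.Nonempty := ⟨M, ⟨p0, hp0, rfl⟩, le_refl M⟩
  obtain ⟨r0, hr0T, hr0min⟩ := Set.exists_min_image T id hTfin hTne
  obtain ⟨⟨p1, hp1cov, hp1w⟩, hr0M⟩ := hr0T
  have hlb : ∀ q : G.Walk s t, Covers R S q → r0 ≤ walkWeight w q := by
    intro q hq
    by_cases h : walkWeight w q ≤ M
    · exact hr0min _ ⟨⟨q, hq, rfl⟩, h⟩
    · exact le_trans hr0M (le_of_not_ge h)
  have hPex : ∃ n, ∃ q : G.Walk s t, Covers R S q ∧ walkWeight w q = r0 ∧ q.length = n :=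
    ⟨p1.length, p1, hp1cov, hp1w, rfl⟩
  obtain ⟨p, hpcov, hpw, hplen⟩ := Nat.find_spec hPex
  refine ⟨p, hpcov, ?_, ?_⟩
  · intro q hq
    rw [hpw]
    exact hlb q hq
  · intro q hq hqe
    rw [hplen]
    exact Nat.find_min' hPex ⟨q, hq, hqe.trans hpw, rfl⟩

end Stmt14

/-- For every source `s` there is a single-source group Steiner
preserver with at most `2^k·n` edges. -/
theorem stmt_14 {V : Type*} [Fintype V] (G : SimpleGraph V) (hconn : G.Connected)
    (w : V → V → ℝ) (hw : ∀ u v, 0 ≤ w u v) (hsymm : ∀ u v, w u v = w v u)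
    {k : ℕ} (R : Fin k → Set V) (hR : ∀ i, (R i).Nonempty)
    (s : V) :
    ∃ H : SimpleGraph V, H ≤ G ∧ H.edgeSet.ncard ≤ 2 ^ k * Fintype.card V ∧
      ∀ t : V, gsDist H w R s t = gsDist G w R s t := by
  classical
  have hex : ∀ (S : Finset (Fin k)) (t : V), ∃ p : G.Walk s t, Stmt14.Covers R S p :=
    fun S t => Stmt14.exists_covering_walk hconn R hR S s t
  have hopt := fun (S : Finset (Fin k)) (t : V) => Stmt14.exists_opt hw R S s t (hex S t)
  choose opt hcov hmin hlen using hopt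
  set f : Finset (Fin k) × V → Sym2 V := fun x =>
    if h : ∃ (u : V) (q : G.Walk s u) (hadj : G.Adj u x.2), opt x.1 x.2 = q.concat hadj
    then s(h.choose, x.2) else s(x.2, x.2) with hf
  set H : SimpleGraph V := SimpleGraph.fromEdgeSet (Set.range f) with hH
  -- H is a subgraph of G
  have hle : H ≤ G := by
    intro a b hab
    rw [hH, fromEdgeSet_adj] at hab
    obtain ⟨⟨x, hx⟩, hne⟩ := hab
    by_cases h : ∃ (u : V) (q : G.Walk s u) (hadj : G.Adj u x.2), opt x.1 x.2 = q.concat hadj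
    · rw [hf] at hx
      simp only [dif_pos h] at hx
      obtain ⟨q, hadj, -⟩ := h.choose_spec
      rcases Sym2.eq_iff.mp hx with ⟨h1, h2⟩ | ⟨h1, h2⟩
      · rw [← h1, ← h2]; exact hadj
      · rw [← h1, ← h2]; exact hadj.symm
    · rw [hf] at hx
      simp only [dif_neg h] at hx
      rcases Sym2.eq_iff.mp hx with ⟨h1, h2⟩ | ⟨h1, h2⟩
      · exact absurd (h1.symm.trans h2) hne
      · exact absurd (h2.symm.trans h1) hne
  -- the key induction: H realizes the optimum for every `(S, t)`
  have key : ∀ (n : ℕ) (S : Finset (Fin k)) (t : V), (opt S t).length ≤ n →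
      ∃ q : H.Walk s t, Stmt14.Covers R S q ∧ walkWeight w q = walkWeight w (opt S t) := by
    have nilcase : ∀ (S : Finset (Fin k)) (t : V), (opt S t).Nil →
        ∃ q : H.Walk s t, Stmt14.Covers R S q ∧ walkWeight w q = walkWeight w (opt S t) := by
      intro S t hnil
      have hst : s = t := hnil.eq
      subst hst
      have hopteq : opt S s = Walk.nil := Walk.nil_iff_eq_nil.mp hnil
      refine ⟨Walk.nil, ?_, ?_⟩
      · intro i hi
        obtain ⟨x, hxR, hxs⟩ := hcov S s i hi
        rw [hopteq] at hxs
        simp only [Walk.support_nil, List.mem_singleton] at hxs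
        exact ⟨x, hxR, by simp [hxs]⟩
      · rw [hopteq]; rfl
    intro n
    induction n with
    | zero =>
      intro S t hlen0
      exact nilcase S t (Walk.nil_iff_length_eq.mpr (Nat.le_zero.mp hlen0))
    | succ n ih =>
      intro S t hlen'
      by_cases hnil : (opt S t).Nil
      · exact nilcase S t hnil
      · have hdec : ∃ (u : V) (q : G.Walk s u) (hadj : G.Adj u t), opt S t = q.concat hadj :=
          Stmt14.exists_concat_of_not_nil _ hnil
        have hHadj0 : H.Adj hdec.choose t := by
          rw [hH, fromEdgeSet_adj]
          constructor
          · refine ⟨(S, t), ?_⟩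
            rw [hf]
            simp only [dif_pos hdec]
          · obtain ⟨q, hadj, -⟩ := hdec.choose_spec
            exact hadj.ne
        obtain ⟨u, hgen⟩ : ∃ u, hdec.choose = u := ⟨hdec.choose, rfl⟩
        have hHadj : H.Adj u t := hgen ▸ hHadj0
        obtain ⟨q, hadj, heq⟩ :
            ∃ (q' : G.Walk s u) (hadj : G.Adj u t), opt S t = q'.concat hadj :=
          hgen ▸ hdec.choose_spec
        set S' := S.filter (fun i => t ∉ R i) with hS'
        have hwopt : walkWeight w (opt S t) = walkWeight w q + w u t :=
          (congrArg (walkWeight w) heq).trans (Stmt14.walkWeight_concat w q hadj)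
        have hqcov : Stmt14.Covers R S' q := by
          intro i hi
          rw [hS', Finset.mem_filter] at hi
          obtain ⟨x, hxR, hxs⟩ := hcov S t i hi.1
          refine ⟨x, hxR, ?_⟩
          rw [(congrArg Walk.support heq).trans (Walk.support_concat q hadj)] at hxs
          rcases List.mem_append.mp hxs with h | h
          · exact h
          · rw [List.mem_singleton] at h
            exact absurd (h ▸ hxR) hi.2
        have h1 : walkWeight w (opt S' u) ≤ walkWeight w q := hmin S' u q hqcov
        have hcov2 : Stmt14.Covers R S ((opt S' u).concat hadj) := by
          intro i hi
          by_cases ht : t ∈ R i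
          · refine ⟨t, ht, ?_⟩
            rw [Walk.support_concat]
            exact List.mem_append.mpr (Or.inr (List.mem_singleton.mpr rfl))
          · have hi' : i ∈ S' := by rw [hS', Finset.mem_filter]; exact ⟨hi, ht⟩
            obtain ⟨x, hxR, hxs⟩ := hcov S' u i hi'
            refine ⟨x, hxR, ?_⟩
            rw [Walk.support_concat]
            exact List.mem_append.mpr (Or.inl hxs)
        have h2 : walkWeight w q ≤ walkWeight w (opt S' u) := by
          have h3 := hmin S t ((opt S' u).concat hadj) hcov2
          rw [hwopt, Stmt14.walkWeight_concat] at h3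
          linarith
        have heqw : walkWeight w q = walkWeight w (opt S' u) := le_antisymm h2 h1
        have hlen2 : (opt S' u).length ≤ n := by
          have h4 := hlen S' u q hqcov heqw
          have h5 : (opt S t).length = q.length + 1 :=
            (congrArg Walk.length heq).trans (Walk.length_concat q hadj)
          omega
        obtain ⟨r, hrcov, hrw⟩ := ih S' u hlen2
        refine ⟨r.concat hHadj, ?_, ?_⟩
        · intro i hi
          by_cases ht : t ∈ R i
          · refine ⟨t, ht, ?_⟩
            rw [Walk.support_concat]
            exact List.mem_append.mpr (Or.inr (List.mem_singleton.mpr rfl))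
          · have hi' : i ∈ S' := by rw [hS', Finset.mem_filter]; exact ⟨hi, ht⟩
            obtain ⟨x, hxR, hxs⟩ := hrcov i hi'
            refine ⟨x, hxR, ?_⟩
            rw [Walk.support_concat]
            exact List.mem_append.mpr (Or.inl hxs)
        · rw [Stmt14.walkWeight_concat, hrw, ← heqw, hwopt]
  refine ⟨H, hle, ?_, ?_⟩
  · -- the cardinality bound
    have h1 : H.edgeSet ⊆ Set.range f := by
      rw [hH, edgeSet_fromEdgeSet]
      exact Set.diff_subset
    calc H.edgeSet.ncard ≤ (Set.range f).ncard :=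
          Set.ncard_le_ncard h1 (Set.finite_range f)
      _ = (f '' Set.univ).ncard := by rw [Set.image_univ]
      _ ≤ (Set.univ : Set (Finset (Fin k) × V)).ncard :=
          Set.ncard_image_le Set.finite_univ
      _ = Fintype.card (Finset (Fin k) × V) := by
          rw [Set.ncard_univ, Nat.card_eq_fintype_card]
      _ = 2 ^ k * Fintype.card V := by
          rw [Fintype.card_prod, Fintype.card_finset, Fintype.card_fin]
  · -- distances are preserved
    intro t
    apply le_antisymm
    · obtain ⟨q, hqcov, hqw⟩ := key (opt Finset.univ t).length Finset.univ t le_rfl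
      have hq' : IsGroupSteiner R q := fun i => hqcov i (Finset.mem_univ i)
      calc gsDist H w R s t ≤ ENNReal.ofReal (walkWeight w q) :=
            iInf_le _ (⟨q, hq'⟩ : {p : H.Walk s t // IsGroupSteiner R p})
        _ = ENNReal.ofReal (walkWeight w (opt Finset.univ t)) := by rw [hqw]
        _ ≤ gsDist G w R s t := by
            refine le_iInf ?_
            rintro ⟨p, hp⟩
            exact ENNReal.ofReal_le_ofReal (hmin Finset.univ t p (fun i _ => hp i))
    · refine le_iInf ?_
      rintro ⟨p, hp⟩
      refine iInf_le_of_le (⟨p.mapLe hle, ?_⟩ : {q : G.Walk s t // IsGroupSteiner R q}) ?_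
      · intro i
        obtain ⟨x, hx1, hx2⟩ := hp i
        exact ⟨x, hx1, by rwa [Stmt14.support_mapLe]⟩
      · rw [Stmt14.walkWeight_mapLe]
end

section
/- Let α ≥ 1, let R = R_1 ∪ ⋯ ∪ R_k, let s ∈ V be a source vertex, and suppose H' is a subgraph of G satisfying d_{H'}(u,v) ≤ α·d_G(u,v) for all u,v ∈ R (a subsetwise R × R α-spanner of G with respect to the shortest-path metric). Then there exists a spanning subgraph H of G whose number of edges is at most 2n plus the number of edges of H', such that σ_H(s,t) ≤ (α+1)·σ_G(s,t) for every vertex t ∈ V, i.e., a single-source group Steiner spanner with source s and stretch α+1. -/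
open SimpleGraph ENNReal

section Aux

variable {V : Type*} {G : SimpleGraph V} {w : V → V → ℝ}

lemma ww_nil {u : V} : walkWeight w (Walk.nil : G.Walk u u) = 0 := rfl

lemma ww_cons {u v x : V} (h : G.Adj u v) (p : G.Walk v x) :
    walkWeight w (Walk.cons h p) = w u v + walkWeight w p := by
  simp [walkWeight]

lemma ww_append {u v x : V} (p : G.Walk u v) (q : G.Walk v x) :
    walkWeight w (p.append q) = walkWeight w p + walkWeight w q := by
  simp [walkWeight, Walk.darts_append]

lemma ww_concat {u v x : V} (p : G.Walk u v) (h : G.Adj v x) :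
    walkWeight w (p.concat h) = walkWeight w p + w v x := by
  rw [Walk.concat_eq_append, ww_append, ww_cons, ww_nil]; ring

lemma ww_nonneg (hw : ∀ u v, 0 ≤ w u v) {u v : V} (p : G.Walk u v) : 0 ≤ walkWeight w p := by
  induction p with
  | nil => simp [ww_nil]
  | cons h p ih => rw [ww_cons]; exact add_nonneg (hw _ _) ih

lemma ww_reverse (hsymm : ∀ u v, w u v = w v u) {u v : V} (p : G.Walk u v) :
    walkWeight w p.reverse = walkWeight w p := by
  induction p with
  | nil => rfl
  | cons h p ih =>
    rw [Walk.reverse_cons, ww_append, ww_cons, ww_cons, ww_nil, ih, hsymm]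
    ring

lemma ww_mapLe {G' : SimpleGraph V} (h : G ≤ G') {u v : V} (p : G.Walk u v) :
    walkWeight w (p.mapLe h) = walkWeight w p := by
  induction p with
  | nil => rfl
  | cons ha p ih =>
    rw [Walk.mapLe, Walk.map_cons, ww_cons, ← Walk.mapLe, ih, ww_cons]
    rfl

lemma support_mapLe {G' : SimpleGraph V} (h : G ≤ G') {u v : V} (p : G.Walk u v) :
    (p.mapLe h).support = p.support := by
  induction p with
  | nil => rfl
  | cons ha p ih =>
    rw [Walk.mapLe, Walk.map_cons, Walk.support_cons, ← Walk.mapLe, ih, Walk.support_cons]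

lemma spDist_le {u v : V} (p : G.Walk u v) :
    spDist G w u v ≤ ENNReal.ofReal (walkWeight w p) := iInf_le _ p

lemma spDist_cons_le (hw : ∀ u v, 0 ≤ w u v) {u v x : V} (h : G.Adj u v) :
    spDist G w u x ≤ ENNReal.ofReal (w u v) + spDist G w v x := by
  simp only [spDist]
  rw [ENNReal.add_iInf]
  refine le_iInf fun q => ?_
  refine (spDist_le (Walk.cons h q)).trans_eq ?_
  rw [ww_cons, ENNReal.ofReal_add (hw _ _) (ww_nonneg hw q)]

lemma spDist_triangle (hw : ∀ u v, 0 ≤ w u v) (u v x : V) :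
    spDist G w u x ≤ spDist G w u v + spDist G w v x := by
  simp only [spDist]
  rw [ENNReal.iInf_add]
  refine le_iInf fun p => ?_
  rw [ENNReal.add_iInf]
  refine le_iInf fun q => ?_
  refine (spDist_le (p.append q)).trans_eq ?_
  rw [ww_append, ENNReal.ofReal_add (ww_nonneg hw p) (ww_nonneg hw q)]

lemma spDist_symm (hsymm : ∀ u v, w u v = w v u) (u v : V) :
    spDist G w u v = spDist G w v u := by
  have h : ∀ a b : V, spDist G w a b ≤ spDist G w b a := by
    intro a b
    refine le_iInf fun p => ?_
    refine (spDist_le p.reverse).trans_eq ?_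
    rw [ww_reverse hsymm]
  exact le_antisymm (h u v) (h v u)

lemma spDist_nonempty {u v : V} (h : spDist G w u v ≠ ⊤) : Nonempty (G.Walk u v) := by
  by_contra hne
  rw [not_nonempty_iff] at hne
  exact h (iInf_of_empty _)

lemma exists_path_le (hw : ∀ u v, 0 ≤ w u v) {u v : V} (p : G.Walk u v) :
    ∃ q : G.Walk u v, q.IsPath ∧ walkWeight w q ≤ walkWeight w p := by
  classical
  induction p with
  | nil => exact ⟨Walk.nil, Walk.IsPath.nil, le_rfl⟩
  | @cons u u' v h p ih =>
    obtain ⟨q, hq, hle⟩ := ih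
    by_cases hx : u ∈ q.support
    · refine ⟨q.dropUntil u hx, hq.dropUntil hx, ?_⟩
      have hsplit := congrArg (walkWeight w) (q.take_spec hx)
      rw [ww_append] at hsplit
      have h1 : 0 ≤ walkWeight w (q.takeUntil u hx) := ww_nonneg hw _
      rw [ww_cons]
      nlinarith [hw u u']
    · exact ⟨Walk.cons h q, hq.cons hx, by rw [ww_cons, ww_cons]; linarith⟩

lemma paths_finite [Fintype V] (G' : SimpleGraph V) (u v : V) :
    Finite {p : G'.Walk u v // p.IsPath} := by
  classical
  exact Finite.of_injective
    (fun p => (⟨p.1, p.2, p.2.length_lt⟩ :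
      {p : G'.Walk u v // p.IsPath ∧ p.length < Fintype.card V}))
    (fun a b h => by cases a; cases b; simpa using h)

lemma exists_min_path [Fintype V] (hw : ∀ u v, 0 ≤ w u v) {u v : V}
    (hne : Nonempty (G.Walk u v)) :
    ∃ q : G.Walk u v, q.IsPath ∧ (∀ p : G.Walk u v, walkWeight w q ≤ walkWeight w p) := by
  classical
  obtain ⟨p0⟩ := hne
  obtain ⟨q0, hq0, _⟩ := exists_path_le hw p0
  haveI := paths_finite G u v
  haveI : Nonempty {p : G.Walk u v // p.IsPath} := ⟨⟨q0, hq0⟩⟩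
  obtain ⟨m, hm⟩ := Finite.exists_min (fun p : {p : G.Walk u v // p.IsPath} => walkWeight w p.1)
  refine ⟨m.1, m.2, fun p => ?_⟩
  obtain ⟨q, hq, hle⟩ := exists_path_le hw p
  exact (hm ⟨q, hq⟩).trans hle

lemma spDist_le_min [Fintype V] {u v : V} {q : G.Walk u v}
    (hmin : ∀ p : G.Walk u v, walkWeight w q ≤ walkWeight w p) :
    ENNReal.ofReal (walkWeight w q) ≤ spDist G w u v :=
  le_iInf fun p => ENNReal.ofReal_le_ofReal (hmin p)

end Aux

lemma forest_lemma {V : Type*} [Fintype V] (G : SimpleGraph V) (hconn : G.Connected)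
    (w : V → V → ℝ) (hw : ∀ u v, 0 ≤ w u v)
    (S : Set V) (hS : S.Nonempty) :
    ∃ F : SimpleGraph V, F ≤ G ∧ F.edgeSet.ncard ≤ Fintype.card V ∧
      ∀ v : V, ∃ c ∈ S, ∃ q : F.Walk c v,
        ∀ r ∈ S, ∀ p : G.Walk r v, walkWeight w q ≤ walkWeight w p := by
  classical
  have hpick : ∀ v : V, ∃ x : Σ c : V, G.Walk c v, x.1 ∈ S ∧ x.2.IsPath ∧
      (∀ r ∈ S, ∀ p : G.Walk r v, walkWeight w x.2 ≤ walkWeight w p) ∧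
      (∀ r ∈ S, ∀ p : G.Walk r v, p.IsPath → walkWeight w p ≤ walkWeight w x.2 →
        x.2.length ≤ p.length) := by
    intro v
    obtain ⟨c0, hc0⟩ := hS
    obtain ⟨p0⟩ := (hconn c0 v)
    obtain ⟨q0, hq0, -⟩ := exists_path_le hw p0
    haveI : ∀ c : V, Finite {p : G.Walk c v // p.IsPath} := fun c => paths_finite G c v
    haveI : Nonempty (Σ c : {c : V // c ∈ S}, {p : G.Walk c.1 v // p.IsPath}) :=
      ⟨⟨⟨c0, hc0⟩, ⟨q0, hq0⟩⟩⟩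
    obtain ⟨m, hm⟩ := Finite.exists_min
      (fun x : Σ c : {c : V // c ∈ S}, {p : G.Walk c.1 v // p.IsPath} =>
        toLex (walkWeight w x.2.1, x.2.1.length))
    refine ⟨⟨m.1.1, m.2.1⟩, m.1.2, m.2.2, ?_, ?_⟩
    · intro r hr p
      obtain ⟨q, hq, hle⟩ := exists_path_le hw p
      have h := hm ⟨⟨r, hr⟩, ⟨q, hq⟩⟩
      rw [Prod.Lex.le_iff] at h
      rcases h with h | ⟨h, -⟩
      · exact (le_of_lt h).trans hle
      · exact (le_of_eq h).trans hle
    · intro r hr p hp hle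
      have h := hm ⟨⟨r, hr⟩, ⟨p, hp⟩⟩
      rw [Prod.Lex.le_iff] at h
      rcases h with h | ⟨-, h2⟩
      · exact absurd hle (not_le.mpr h)
      · exact h2
  choose pk hk1 hk2 hk3 hk4 using hpick
  set N := Fintype.card V with hN
  set W : V → ℝ := fun v => walkWeight w (pk v).2 with hW
  set len : V → ℕ := fun v => (pk v).2.length with hlendef
  set cnt : V → ℕ := fun v => (Finset.univ.filter (fun x => W x < W v)).card with hcnt
  set ν : V → ℕ := fun v => cnt v * (N + 1) + len v with hν
  have hlenN : ∀ v, len v < N := fun v => (hk2 v).length_lt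
  have hdec : ∀ v : V, v ∉ S → ∃ u : V, ∃ pre : G.Walk (pk v).1 u, ∃ h : G.Adj u v,
      (pk v).2 = pre.concat h := by
    intro v hv
    have hnev : v ≠ (pk v).1 := fun h => hv (h ▸ hk1 v)
    obtain ⟨u, hadj, q, hq⟩ := Walk.exists_eq_cons_of_ne hnev ((pk v).2.reverse)
    refine ⟨u, q.reverse, hadj.symm, ?_⟩
    have h2 := congrArg Walk.reverse hq
    rw [Walk.reverse_reverse, Walk.reverse_cons, ← Walk.concat_eq_append] at h2
    exact h2
  choose par pre hadj hcat using hdec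
  set part : V → V := fun v => if hv : v ∉ S then par v hv else v with hpart
  set F : SimpleGraph V :=
    SimpleGraph.fromEdgeSet {e | ∃ v : V, ∃ hv : v ∉ S, e = s(par v hv, v)} with hF
  have hFG : F ≤ G := by
    intro a b hab
    rw [hF, fromEdgeSet_adj] at hab
    obtain ⟨⟨v, hv, he⟩, hne⟩ := hab
    rw [Sym2.eq_iff] at he
    rcases he with ⟨h1, h2⟩ | ⟨h1, h2⟩
    · rw [h1, h2]; exact hadj v hv
    · rw [h1, h2]; exact (hadj v hv).symm
  have hcard : F.edgeSet.ncard ≤ Fintype.card V := by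
    have hsub : F.edgeSet ⊆ Set.range (fun v : V => s(part v, v)) := by
      rw [hF, edgeSet_fromEdgeSet]
      rintro e ⟨⟨v, hv, rfl⟩, -⟩
      exact ⟨v, by rw [hpart]; simp [hv]⟩
    calc F.edgeSet.ncard ≤ (Set.range fun v : V => s(part v, v)).ncard :=
          Set.ncard_le_ncard hsub (Set.finite_range _)
      _ = ((fun v : V => s(part v, v)) '' Set.univ).ncard := by rw [Set.image_univ]
      _ ≤ (Set.univ : Set V).ncard := Set.ncard_image_le Set.finite_univ
      _ = Fintype.card V := by rw [Set.ncard_univ, Nat.card_eq_fintype_card]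
  have hFadj : ∀ v (hv : v ∉ S), F.Adj (par v hv) v := by
    intro v hv
    rw [hF, fromEdgeSet_adj]
    exact ⟨⟨v, hv, rfl⟩, (hadj v hv).ne⟩
  have hpre_path : ∀ v (hv : v ∉ S), (pre v hv).IsPath := by
    intro v hv
    have h2 := (hk2 v).reverse
    rw [hcat v hv, Walk.reverse_concat] at h2
    have h3 := h2.of_cons
    have h4 := h3.reverse
    rwa [Walk.reverse_reverse] at h4
  have hWpre : ∀ v (hv : v ∉ S), W v = walkWeight w (pre v hv) + w (par v hv) v := by
    intro v hv
    rw [hW]; simp only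
    rw [hcat v hv, ww_concat]
  have key : ∀ n v, ν v < n → ∃ c ∈ S, ∃ q : F.Walk c v, walkWeight w q ≤ W v := by
    intro n
    induction n with
    | zero => intro v h; exact absurd h (Nat.not_lt_zero _)
    | succ n ih =>
      intro v hνv
      by_cases hvS : v ∈ S
      · exact ⟨v, hvS, Walk.nil, by rw [ww_nil]; exact ww_nonneg hw _⟩
      · set u := par v hvS with hu
        have hWu : W u ≤ walkWeight w (pre v hvS) :=
          hk3 u (pk v).1 (hk1 v) (pre v hvS)
        have hWuv : W u + w u v ≤ W v := by
          rw [hWpre v hvS]; linarith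
        have hWle : W u ≤ W v := by have := hw u v; linarith
        have hνlt : ν u < ν v := by
          rcases lt_or_eq_of_le hWle with hlt | heq
          · have hcnt_lt : cnt u < cnt v := by
              rw [hcnt]; simp only
              apply Finset.card_lt_card
              rw [Finset.ssubset_iff_of_subset]
              · exact ⟨u, by simp [hlt], by simp⟩
              · intro x hx
                simp only [Finset.mem_filter, Finset.mem_univ, true_and] at hx ⊢
                exact hx.trans hlt
            have e2 : (cnt u + 1) * (N + 1) ≤ cnt v * (N + 1) :=
              Nat.mul_le_mul_right _ hcnt_lt
            have e1 : (cnt u + 1) * (N + 1) = cnt u * (N + 1) + (N + 1) := by ring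
            have e3 := hlenN u
            rw [hν]; simp only
            omega
          · have hw0 : w u v = 0 := le_antisymm (by linarith) (hw u v)
            have hwwpre : walkWeight w (pre v hvS) ≤ W u := by
              rw [heq, hWpre v hvS, hw0]; linarith
            have hlen_le : len u ≤ (pre v hvS).length :=
              hk4 u (pk v).1 (hk1 v) (pre v hvS) (hpre_path v hvS) hwwpre
            have hlenv : (pre v hvS).length + 1 = len v := by
              rw [hlendef]; simp only
              rw [hcat v hvS, Walk.length_concat]
            have hcnteq : cnt u = cnt v := by
              rw [hcnt]; simp only
              congr 1
              apply Finset.filter_congr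
              intro x _
              rw [heq]
            rw [hν]; simp only
            rw [hcnteq]
            have := Nat.add_lt_add_left (show len u < len v by omega) (cnt v * (N + 1))
            exact this
        obtain ⟨c, hc, q, hq⟩ := ih u (by omega)
        refine ⟨c, hc, q.concat (hFadj v hvS), ?_⟩
        rw [ww_concat]
        linarith
  refine ⟨F, hFG, hcard, fun v => ?_⟩
  obtain ⟨c, hc, q, hq⟩ := key (ν v + 1) v (Nat.lt_succ_self _)
  exact ⟨c, hc, q, fun r hr p => hq.trans (hk3 v r hr p)⟩

lemma chain_lemma {V : Type*} [Fintype V] {G H' : SimpleGraph V} {w : V → V → ℝ}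
    (hw : ∀ u v, 0 ≤ w u v) {k : ℕ} (R : Fin k → Set V)
    {α : ℝ} (hα0 : 0 ≤ α)
    (hsp : ∀ u ∈ ⋃ i, R i, ∀ v ∈ ⋃ i, R i,
      spDist H' w u v ≤ ENNReal.ofReal α * spDist G w u v)
    {x t : V} (p : G.Walk x t) (hhit : ∃ y ∈ ⋃ i, R i, y ∈ p.support) :
    ∃ (a b : V) (D1 M D2 : ℝ) (q : H'.Walk a b),
      a ∈ (⋃ i, R i) ∧ b ∈ (⋃ i, R i) ∧ 0 ≤ D1 ∧ 0 ≤ M ∧ 0 ≤ D2 ∧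
      D1 + M + D2 ≤ walkWeight w p ∧
      (∀ i, (∃ y ∈ R i, y ∈ p.support) → ∃ y ∈ R i, y ∈ q.support) ∧
      spDist G w x a ≤ ENNReal.ofReal D1 ∧
      walkWeight w q ≤ α * M ∧
      spDist G w b t ≤ ENNReal.ofReal D2 ∧
      spDist G w x b ≤ ENNReal.ofReal (D1 + M) := by
  revert hhit
  induction p with
  | nil =>
    intro hhit
    rename_i x
    obtain ⟨y, hyRU, hysup⟩ := hhit
    rw [Walk.support_nil, List.mem_singleton] at hysup
    subst hysup
    have hzero : spDist G w y y ≤ ENNReal.ofReal 0 := by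
      simpa [ww_nil] using spDist_le (Walk.nil : G.Walk y y)
    refine ⟨y, y, 0, 0, 0, Walk.nil, hyRU, hyRU, le_rfl, le_rfl, le_rfl, by rw [ww_nil]; norm_num, ?_, hzero, by rw [ww_nil]; norm_num, hzero, by simpa using hzero⟩
    intro i ⟨z, hz1, hz2⟩
    rw [Walk.support_nil, List.mem_singleton] at hz2
    subst hz2
    exact ⟨z, hz1, by simp⟩
  | @cons x x' t hadj p' ih =>
    intro hhit
    by_cases hx : x ∈ ⋃ i, R i
    · by_cases hp' : ∃ y ∈ ⋃ i, R i, y ∈ p'.support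
      · obtain ⟨a', b', D1', M', D2', q', ha', hb', hD1', hM', hD2', hsum', hcov', hxa', hq', hbt', hxb'⟩ := ih hp'
        have h1 : spDist G w x a' ≤ ENNReal.ofReal (w x x' + D1') := by
          refine (spDist_cons_le hw hadj).trans ?_
          rw [ENNReal.ofReal_add (hw _ _) hD1']
          exact add_le_add_right hxa' _
        have h2 : spDist H' w x a' ≤ ENNReal.ofReal (α * (w x x' + D1')) := by
          refine (hsp x hx a' ha').trans ?_
          rw [ENNReal.ofReal_mul hα0]
          exact mul_le_mul_right h1 _
        have h3 : Nonempty (H'.Walk x a') := by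
          refine spDist_nonempty (w := w) (fun htop => ?_)
          rw [htop] at h2
          exact ENNReal.ofReal_ne_top (top_le_iff.mp h2)
        obtain ⟨q0, hq0path, hq0min⟩ := exists_min_path hw h3
        have hq0w : walkWeight w q0 ≤ α * (w x x' + D1') := by
          have h4 := (spDist_le_min hq0min).trans h2
          rwa [ENNReal.ofReal_le_ofReal_iff
            (mul_nonneg hα0 (add_nonneg (hw _ _) hD1'))] at h4
        have hzero : spDist G w x x ≤ ENNReal.ofReal 0 := by
          simpa [ww_nil] using spDist_le (Walk.nil : G.Walk x x)
        refine ⟨x, b', 0, w x x' + D1' + M', D2', q0.append q', hx, hb', le_rfl,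
          by have := hw x x'; linarith, hD2', ?_, ?_, hzero, ?_, hbt', ?_⟩
        · rw [ww_cons]; linarith
        · intro i ⟨y, hyR, hysup⟩
          rw [Walk.support_cons, List.mem_cons] at hysup
          rcases hysup with rfl | hysup
          · exact ⟨y, hyR, by rw [Walk.mem_support_append_iff]; exact Or.inl q0.start_mem_support⟩
          · obtain ⟨z, hz1, hz2⟩ := hcov' i ⟨y, hyR, hysup⟩
            exact ⟨z, hz1, by rw [Walk.mem_support_append_iff]; exact Or.inr hz2⟩
        · rw [ww_append]; nlinarith
        · have h5 : spDist G w x b' ≤ ENNReal.ofReal (w x x' + (D1' + M')) := by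
            refine (spDist_cons_le hw hadj).trans ?_
            rw [ENNReal.ofReal_add (hw _ _) (by positivity)]
            exact add_le_add_right hxb' _
          refine h5.trans_eq ?_
          congr 1
          ring
      · have hzero : spDist G w x x ≤ ENNReal.ofReal 0 := by
          simpa [ww_nil] using spDist_le (Walk.nil : G.Walk x x)
        refine ⟨x, x, 0, 0, walkWeight w (Walk.cons hadj p'), Walk.nil, hx, hx, le_rfl,
          le_rfl, ww_nonneg hw _, by norm_num, ?_, hzero, by rw [ww_nil]; norm_num,
          spDist_le _, by simpa using hzero⟩
        intro i ⟨y, hyR, hysup⟩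
        rw [Walk.support_cons, List.mem_cons] at hysup
        rcases hysup with rfl | hysup
        · exact ⟨y, hyR, by simp⟩
        · exact absurd ⟨y, Set.mem_iUnion.mpr ⟨i, hyR⟩, hysup⟩ hp'
    · have hp' : ∃ y ∈ ⋃ i, R i, y ∈ p'.support := by
        obtain ⟨y, hyRU, hysup⟩ := hhit
        rw [Walk.support_cons, List.mem_cons] at hysup
        rcases hysup with rfl | hysup
        · exact absurd hyRU hx
        · exact ⟨y, hyRU, hysup⟩
      obtain ⟨a', b', D1', M', D2', q', ha', hb', hD1', hM', hD2', hsum', hcov', hxa', hq', hbt', hxb'⟩ := ih hp'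
      refine ⟨a', b', w x x' + D1', M', D2', q', ha', hb', by have := hw x x'; linarith, hM', hD2',
        ?_, ?_, ?_, hq', hbt', ?_⟩
      · rw [ww_cons]; linarith
      · intro i ⟨y, hyR, hysup⟩
        rw [Walk.support_cons, List.mem_cons] at hysup
        rcases hysup with rfl | hysup
        · exact absurd (Set.mem_iUnion.mpr ⟨i, hyR⟩) hx
        · exact hcov' i ⟨y, hyR, hysup⟩
      · refine (spDist_cons_le hw hadj).trans ?_
        rw [ENNReal.ofReal_add (hw _ _) hD1']
        exact add_le_add_right hxa' _
      · have h5 : spDist G w x b' ≤ ENNReal.ofReal (w x x' + (D1' + M')) := by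
          refine (spDist_cons_le hw hadj).trans ?_
          rw [ENNReal.ofReal_add (hw _ _) (by positivity : (0:ℝ) ≤ D1' + M')]
          exact add_le_add_right hxb' _
        refine h5.trans_eq ?_
        congr 1
        ring



/-- From a subsetwise `R × R` `α`-spanner `H'`, with `R = R_1 ∪ ⋯ ∪ R_k`,
one obtains, for every source `s`, a single-source group Steiner spanner with stretch
`α+1` having at most `2n` edges plus the edges of `H'`. -/
theorem stmt_16 {V : Type*} [Fintype V] (G : SimpleGraph V) (hconn : G.Connected)
    (w : V → V → ℝ) (hw : ∀ u v, 0 ≤ w u v) (hsymm : ∀ u v, w u v = w v u)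
    {k : ℕ} (R : Fin k → Set V) (hR : ∀ i, (R i).Nonempty)
    (α : ℝ) (hα : 1 ≤ α)
    (s : V)
    (H' : SimpleGraph V) (hH' : H' ≤ G)
    (hsp : ∀ u ∈ ⋃ i, R i, ∀ v ∈ ⋃ i, R i,
      spDist H' w u v ≤ ENNReal.ofReal α * spDist G w u v) :
    ∃ H : SimpleGraph V, H ≤ G ∧
      H.edgeSet.ncard ≤ 2 * Fintype.card V + H'.edgeSet.ncard ∧
      ∀ t : V, gsDist H w R s t ≤ ENNReal.ofReal (α + 1) * gsDist G w R s t := by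
  classical
  have hα0 : (0:ℝ) ≤ α := le_trans zero_le_one hα
  have hα10 : (0:ℝ) ≤ α + 1 := by linarith
  have hc0 : ENNReal.ofReal (α + 1) ≠ 0 := by
    rw [Ne, ENNReal.ofReal_eq_zero, not_le]
    linarith
  have hct : ENNReal.ofReal (α + 1) ≠ ⊤ := ENNReal.ofReal_ne_top
  obtain ⟨T, hTG, hTcard, hTprop⟩ := forest_lemma G hconn w hw {s} ⟨s, rfl⟩
  have lemul : ∀ {ι : Sort _} (f : ι → ℝ≥0∞) (x : ℝ≥0∞),
      (∀ i, x ≤ ENNReal.ofReal (α+1) * f i) → x ≤ ENNReal.ofReal (α+1) * ⨅ i, f i := by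
    intro ι f x h
    rcases isEmpty_or_nonempty ι with hι | hι
    · rw [iInf_of_empty, ENNReal.mul_top hc0]
      exact le_top
    · calc x ≤ ⨅ i, ENNReal.ofReal (α+1) * f i := le_iInf h
        _ = ⨅ i, f i * ENNReal.ofReal (α+1) := by simp_rw [mul_comm]
        _ = (⨅ i, f i) * ENNReal.ofReal (α+1) := (ENNReal.iInf_mul_of_ne hc0 hct).symm
        _ = _ := mul_comm _ _
  have hT : ∀ v : V, ∃ q : T.Walk s v, ENNReal.ofReal (walkWeight w q) ≤ spDist G w s v := by
    intro v
    obtain ⟨c, hc, q, hq⟩ := hTprop v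
    rw [Set.mem_singleton_iff] at hc
    subst hc
    exact ⟨q, le_iInf fun p => ENNReal.ofReal_le_ofReal (hq c rfl p)⟩
  have hone : (1:ℝ≥0∞) ≤ ENNReal.ofReal (α + 1) := by
    rw [← ENNReal.ofReal_one]
    exact ENNReal.ofReal_le_ofReal (by linarith)
  by_cases hRUne : (⋃ i, R i).Nonempty
  · obtain ⟨F, hFG, hFcard, hFprop⟩ := forest_lemma G hconn w hw (⋃ i, R i) hRUne
    refine ⟨H' ⊔ T ⊔ F, sup_le (sup_le hH' hTG) hFG, ?_, fun t => ?_⟩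
    · have h1 : (H' ⊔ T ⊔ F).edgeSet = H'.edgeSet ∪ T.edgeSet ∪ F.edgeSet := by
        simp [edgeSet_sup]
      rw [h1]
      calc (H'.edgeSet ∪ T.edgeSet ∪ F.edgeSet).ncard
          ≤ (H'.edgeSet ∪ T.edgeSet).ncard + F.edgeSet.ncard := Set.ncard_union_le _ _
        _ ≤ H'.edgeSet.ncard + T.edgeSet.ncard + F.edgeSet.ncard :=
            add_le_add_left (Set.ncard_union_le _ _) _
        _ ≤ 2 * Fintype.card V + H'.edgeSet.ncard := by omega
    · refine lemul _ _ ?_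
      rintro ⟨p, hp⟩
      have hhit : ∃ y ∈ ⋃ i, R i, y ∈ p.support := by
        obtain ⟨y0, hy0⟩ := hRUne
        obtain ⟨i, hi⟩ := Set.mem_iUnion.mp hy0
        obtain ⟨y, hyR, hysup⟩ := hp i
        exact ⟨y, Set.mem_iUnion.mpr ⟨i, hyR⟩, hysup⟩
      obtain ⟨a, b, D1, M, D2, q, haRU, hbRU, hD1, hM, hD2, hsum, hcov, hxa, hq, hbt, hxb⟩ :=
        chain_lemma hw R hα0 hsp p hhit
      have hL0 : 0 ≤ walkWeight w p := ww_nonneg hw p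
      obtain ⟨qsa, hqsa⟩ := hT a
      have hqsaw : walkWeight w qsa ≤ D1 := by
        have h2 := hqsa.trans hxa
        rwa [ENNReal.ofReal_le_ofReal_iff hD1] at h2
      have hH'H : H' ≤ H' ⊔ T ⊔ F := le_sup_left.trans le_sup_left
      have hTH : T ≤ H' ⊔ T ⊔ F := le_sup_right.trans le_sup_left
      have hFH : F ≤ H' ⊔ T ⊔ F := le_sup_right
      rcases le_total (α * D2) (α * D1 + M) with hcase | hcase
      · -- Route A : s → a (tree), a → b (chain), b → c (H'), c → t (forest)
        obtain ⟨c, hcRU, qF, hqF⟩ := hFprop t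
        have hqFw : walkWeight w qF ≤ D2 := by
          have h1 : ENNReal.ofReal (walkWeight w qF) ≤ spDist G w b t :=
            le_iInf fun pp => ENNReal.ofReal_le_ofReal (hqF b hbRU pp)
          have h2 := h1.trans hbt
          rwa [ENNReal.ofReal_le_ofReal_iff hD2] at h2
        have hct' : spDist G w c t ≤ ENNReal.ofReal D2 := by
          refine (spDist_le (qF.mapLe hFG)).trans ?_
          rw [ww_mapLe]
          exact ENNReal.ofReal_le_ofReal hqFw
        have hbc : spDist G w b c ≤ ENNReal.ofReal (2 * D2) := by
          refine (spDist_triangle hw b t c).trans ?_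
          rw [show (2:ℝ) * D2 = D2 + D2 by ring, ENNReal.ofReal_add hD2 hD2]
          exact add_le_add hbt ((le_of_eq (spDist_symm hsymm t c)).trans hct')
        have h2 : spDist H' w b c ≤ ENNReal.ofReal (α * (2*D2)) := by
          refine (hsp b hbRU c hcRU).trans ?_
          rw [ENNReal.ofReal_mul hα0]
          exact mul_le_mul_right hbc _
        have h3 : Nonempty (H'.Walk b c) := by
          refine spDist_nonempty (w := w) (fun htop => ?_)
          rw [htop] at h2
          exact ENNReal.ofReal_ne_top (top_le_iff.mp h2)
        obtain ⟨qbc, hqbcpath, hqbcmin⟩ := exists_min_path hw h3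
        have hqbcw : walkWeight w qbc ≤ α * (2*D2) := by
          have h4 := (spDist_le_min hqbcmin).trans h2
          rwa [ENNReal.ofReal_le_ofReal_iff (by positivity)] at h4
        set route : (H' ⊔ T ⊔ F).Walk s t := (((qsa.mapLe hTH).append (q.mapLe hH'H)).append
          (qbc.mapLe hH'H)).append (qF.mapLe hFH) with hroute
        have hgs : IsGroupSteiner R route := by
          intro i
          obtain ⟨z, hz1, hz2⟩ := hcov i (hp i)
          refine ⟨z, hz1, ?_⟩
          rw [hroute]
          rw [Walk.mem_support_append_iff]
          left
          rw [Walk.mem_support_append_iff]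
          left
          rw [Walk.mem_support_append_iff]
          right
          rwa [support_mapLe]
        have hfirst : gsDist (H' ⊔ T ⊔ F) w R s t ≤ ENNReal.ofReal (walkWeight w route) :=
          iInf_le (fun pq : {pq : (H' ⊔ T ⊔ F).Walk s t // IsGroupSteiner R pq} =>
            ENNReal.ofReal (walkWeight w pq.1)) ⟨route, hgs⟩
        refine hfirst.trans ?_
        rw [hroute, ww_append, ww_append, ww_append, ww_mapLe, ww_mapLe, ww_mapLe, ww_mapLe]
        rw [← ENNReal.ofReal_mul hα10]
        apply ENNReal.ofReal_le_ofReal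
        nlinarith [mul_le_mul_of_nonneg_left hsum hα10]
      · -- Route B : s → a (tree), a → b (chain), b → s (tree reversed), s → t (tree)
        obtain ⟨qsb, hqsb⟩ := hT b
        have hqsbw : walkWeight w qsb ≤ D1 + M := by
          have h2 := hqsb.trans hxb
          rwa [ENNReal.ofReal_le_ofReal_iff (by positivity)] at h2
        obtain ⟨qst, hqst⟩ := hT t
        have hqstw : walkWeight w qst ≤ walkWeight w p := by
          have h2 := hqst.trans (spDist_le p)
          rwa [ENNReal.ofReal_le_ofReal_iff hL0] at h2
        set route : (H' ⊔ T ⊔ F).Walk s t := (((qsa.mapLe hTH).append (q.mapLe hH'H)).append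
          ((qsb.reverse).mapLe hTH)).append (qst.mapLe hTH) with hroute
        have hgs : IsGroupSteiner R route := by
          intro i
          obtain ⟨z, hz1, hz2⟩ := hcov i (hp i)
          refine ⟨z, hz1, ?_⟩
          rw [hroute]
          rw [Walk.mem_support_append_iff]
          left
          rw [Walk.mem_support_append_iff]
          left
          rw [Walk.mem_support_append_iff]
          right
          rwa [support_mapLe]
        have hfirst : gsDist (H' ⊔ T ⊔ F) w R s t ≤ ENNReal.ofReal (walkWeight w route) :=
          iInf_le (fun pq : {pq : (H' ⊔ T ⊔ F).Walk s t // IsGroupSteiner R pq} =>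
            ENNReal.ofReal (walkWeight w pq.1)) ⟨route, hgs⟩
        refine hfirst.trans ?_
        rw [hroute, ww_append, ww_append, ww_append, ww_mapLe, ww_mapLe, ww_mapLe, ww_mapLe,
          ww_reverse hsymm]
        rw [← ENNReal.ofReal_mul hα10]
        apply ENNReal.ofReal_le_ofReal
        nlinarith [mul_le_mul_of_nonneg_left hsum hα0,
          mul_nonneg (by linarith : (0:ℝ) ≤ α - 1) hD1]
  · refine ⟨T, hTG, by omega, fun t => ?_⟩
    refine lemul _ _ ?_
    rintro ⟨p, hp⟩
    obtain ⟨q, hq⟩ := hT t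
    have hgs : IsGroupSteiner R q := by
      intro i
      obtain ⟨y, hy⟩ := hR i
      exact absurd ⟨y, Set.mem_iUnion.mpr ⟨i, hy⟩⟩ hRUne
    calc gsDist T w R s t ≤ ENNReal.ofReal (walkWeight w q) :=
          iInf_le (fun pq : {pq : T.Walk s t // IsGroupSteiner R pq} =>
            ENNReal.ofReal (walkWeight w pq.1)) ⟨q, hgs⟩
      _ ≤ spDist G w s t := hq
      _ ≤ ENNReal.ofReal (walkWeight w p) := spDist_le p
      _ ≤ ENNReal.ofReal (α+1) * ENNReal.ofReal (walkWeight w p) :=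
          le_mul_of_one_le_left (zero_le') hone
end
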